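/- arXiv:2505.12387 — 6 statements merged into one kernel-verified Lean document; each statement's English description precedes it below -/
import Mathlib

section
/- (Master Balance Theorem, fixed-point form) Suppose ℓ(x, ·) satisfies the A-exponential symmetry ℓ(x, exp(λA)θ) = ℓ(x, θ) for all λ, x, θ, and θ* is a local minimum of F(θ) = E_x ℓ(x,θ) + γ‖θ‖² + (η/4) E_B ‖E_{x∈B} ∇ℓ(x,θ)‖². Then −η E_B [ (E_{x∈B}∇ℓ(x,θ*))ᵀ Ã (E_{x∈B}∇ℓ(x,θ*)) ] + 4γ (θ*)ᵀ Ã θ* = 0, where Ã = (A + Aᵀ)/2. -/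
open Matrix Finset

/-- Euclidean gradient of `f : ℝⁿ → ℝ`. -/
noncomputable def grad {n : ℕ} (f : (Fin n → ℝ) → ℝ) (θ : Fin n → ℝ) : Fin n → ℝ :=
  fun i => fderiv ℝ f θ (Pi.single i 1)

section Aux

open NormedSpace

attribute [local instance] Matrix.linftyOpNormedRing Matrix.linftyOpNormedAlgebra

theorem mbt_clm_eq_sum {n : ℕ} (φ : (Fin n → ℝ) →L[ℝ] ℝ) (v : Fin n → ℝ) :
    φ v = ∑ j, v j * φ (Pi.single j 1) := by
  have hv : v = ∑ j, v j • (Pi.single j (1:ℝ) : Fin n → ℝ) := by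
    funext k
    simp [Finset.sum_apply, Pi.single_apply]
  conv_lhs => rw [hv]
  simp [map_sum]

theorem mbt_expMulVecDeriv {n : ℕ} (M : Matrix (Fin n) (Fin n) ℝ) (v : Fin n → ℝ) (i : Fin n) :
    HasDerivAt (fun t : ℝ => ((exp (t • M)).mulVec v) i) ((M.mulVec v) i) 0 := by
  have h : HasDerivAt (fun t : ℝ => exp (t • M)) M 0 := by
    have := hasDerivAt_exp_smul_const (𝕂 := ℝ) M 0; simp only [zero_smul, NormedSpace.exp_zero, one_mul] at this; exact this
  let L : Matrix (Fin n) (Fin n) ℝ →ₗ[ℝ] ℝ :=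
    { toFun := fun N => (N.mulVec v) i
      map_add' := fun N N' => by simp [Matrix.add_mulVec]
      map_smul' := fun c N => by simp [Matrix.smul_mulVec] }
  exact (L.toContinuousLinearMap.hasFDerivAt.comp_hasDerivAt 0 h :)

theorem mbt_expDot {n : ℕ} (M : Matrix (Fin n) (Fin n) ℝ) (v : Fin n → ℝ) :
    HasDerivAt (fun t : ℝ => (exp (t • M)).mulVec v ⬝ᵥ (exp (t • M)).mulVec v)
      (M.mulVec v ⬝ᵥ v + v ⬝ᵥ M.mulVec v) 0 := by
  have H : HasDerivAt
      (fun t : ℝ => ∑ i, ((exp (t • M)).mulVec v) i * ((exp (t • M)).mulVec v) i)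
      (∑ i, ((M.mulVec v) i * v i + v i * (M.mulVec v) i)) 0 := by
    refine HasDerivAt.fun_sum fun i _ => ?_
    have := (mbt_expMulVecDeriv M v i).fun_mul (mbt_expMulVecDeriv M v i)
    simpa [Matrix.one_mulVec] using this
  have hfun : (fun t : ℝ => (exp (t • M)).mulVec v ⬝ᵥ (exp (t • M)).mulVec v)
      = fun t : ℝ => ∑ i, ((exp (t • M)).mulVec v) i * ((exp (t • M)).mulVec v) i := by
    funext t; simp [dotProduct]
  rw [hfun]
  convert H using 1
  simp [dotProduct, Finset.sum_add_distrib]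

theorem mbt_grad_shift {n : ℕ} (f : (Fin n → ℝ) → ℝ) (hf : Differentiable ℝ f)
    (A : Matrix (Fin n) (Fin n) ℝ) (t : ℝ) (θ : Fin n → ℝ)
    (hsym : ∀ θ', f ((exp (t • A)).mulVec θ') = f θ') :
    grad f ((exp (t • A)).mulVec θ) = (exp (t • (-Aᵀ))).mulVec (grad f θ) := by
  set M := exp (t • A) with hM
  let L : (Fin n → ℝ) →L[ℝ] (Fin n → ℝ) := M.mulVecLin.toContinuousLinearMap
  have hcomp : HasFDerivAt f ((fderiv ℝ f (M.mulVec θ)).comp L) θ := by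
    have h1 : HasFDerivAt f (fderiv ℝ f (M.mulVec θ)) (L θ) := (hf _).hasFDerivAt
    have h2 := h1.comp θ L.hasFDerivAt
    have he : (f ∘ L) = f := by funext θ'; exact hsym θ'
    rwa [he] at h2
  have hfd : fderiv ℝ f θ = (fderiv ℝ f (M.mulVec θ)).comp L := hcomp.fderiv
  have key : grad f θ = Mᵀ.mulVec (grad f (M.mulVec θ)) := by
    funext i
    have h0 : grad f θ i = fderiv ℝ f (M.mulVec θ) (M.mulVec (Pi.single i 1)) := by
      rw [grad, hfd]; rfl
    rw [h0, mbt_clm_eq_sum]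
    simp only [Matrix.mulVec, dotProduct, Matrix.transpose_apply]
    refine Finset.sum_congr rfl fun j _ => ?_
    have : ∑ x, M j x * (Pi.single i (1:ℝ) : Fin n → ℝ) x = M j i := by
      simp [Pi.single_apply]
    rw [this]; rfl
  have hMT : Mᵀ = exp (t • Aᵀ) := by
    rw [hM, ← Matrix.exp_transpose, Matrix.transpose_smul]
  have hinv : exp (t • (-Aᵀ)) * exp (t • Aᵀ) = 1 := by
    rw [← Matrix.exp_add_of_commute]
    · simp
    · simpa using (Commute.refl (t • Aᵀ)).neg_left
  calc grad f (M.mulVec θ)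
      = ((exp (t • (-Aᵀ)) * exp (t • Aᵀ))).mulVec (grad f (M.mulVec θ)) := by
        rw [hinv, Matrix.one_mulVec]
    _ = (exp (t • (-Aᵀ))).mulVec (grad f θ) := by
        rw [← Matrix.mulVec_mulVec, ← hMT, ← key]

-- quadratic-form identity used at the end
theorem mbt_quad {n : ℕ} (A : Matrix (Fin n) (Fin n) ℝ) (v : Fin n → ℝ) :
    v ⬝ᵥ ((2⁻¹ : ℝ) • (A + Aᵀ)).mulVec v
      = -(2⁻¹) * ((-Aᵀ).mulVec v ⬝ᵥ v + v ⬝ᵥ (-Aᵀ).mulVec v) := by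
  have h1 : v ⬝ᵥ A.mulVec v = Aᵀ.mulVec v ⬝ᵥ v := by
    rw [Matrix.dotProduct_mulVec, ← Matrix.mulVec_transpose]
  have h2 : v ⬝ᵥ Aᵀ.mulVec v = Aᵀ.mulVec v ⬝ᵥ v := dotProduct_comm _ _
  simp only [Matrix.smul_mulVec, Matrix.add_mulVec, Matrix.neg_mulVec,
    dotProduct_smul, dotProduct_add, dotProduct_neg,
    neg_dotProduct, smul_eq_mul]
  rw [h1, h2]
  ring

end Aux

theorem mbt_quad' {n : ℕ} (A : Matrix (Fin n) (Fin n) ℝ) (v : Fin n → ℝ) :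
    v ⬝ᵥ ((2⁻¹ : ℝ) • (A + Aᵀ)).mulVec v
      = 2⁻¹ * (A.mulVec v ⬝ᵥ v + v ⬝ᵥ A.mulVec v) := by
  have h1 : v ⬝ᵥ A.mulVec v = Aᵀ.mulVec v ⬝ᵥ v := by
    rw [Matrix.dotProduct_mulVec, ← Matrix.mulVec_transpose]
  have h2 : v ⬝ᵥ Aᵀ.mulVec v = Aᵀ.mulVec v ⬝ᵥ v := dotProduct_comm _ _
  have h3 : A.mulVec v ⬝ᵥ v = v ⬝ᵥ A.mulVec v := dotProduct_comm _ _
  simp only [Matrix.smul_mulVec, Matrix.add_mulVec,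
    dotProduct_smul, dotProduct_add, smul_eq_mul]
  rw [h1, h2, h3, h1]

/-- (Master Balance Theorem, fixed-point form.)  Data `x` ranges over a finite type `X`
with probability weights `p`; minibatches are indexed by a finite type `B` with
distribution `q`, and a minibatch `b` averages samples with weights `c b`.  If the
per-sample loss has the `A`-exponential symmetry and `θ*` is a local minimum of the
entropic loss `F`, then the gradient/weight balance identity holds for `Ã = (A+Aᵀ)/2`. -/
theorem stmt6 {n : ℕ} {X B : Type} [Fintype X] [Fintype B]
    (p : X → ℝ) (hp : ∀ x, 0 ≤ p x) (hp1 : ∑ x, p x = 1)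
    (q : B → ℝ) (hq : ∀ b, 0 ≤ q b) (hq1 : ∑ b, q b = 1)
    (c : B → X → ℝ) (hc : ∀ b x, 0 ≤ c b x) (hc1 : ∀ b, ∑ x, c b x = 1)
    (ℓ : X → (Fin n → ℝ) → ℝ) (hℓ : ∀ x, ContDiff ℝ 2 (ℓ x))
    (A : Matrix (Fin n) (Fin n) ℝ)
    (hsym : ∀ (x : X) (lam : ℝ) (θ : Fin n → ℝ),
      ℓ x ((NormedSpace.exp (lam • A)).mulVec θ) = ℓ x θ)
    (η γ : ℝ)
    (F : (Fin n → ℝ) → ℝ)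
    (hF : ∀ θ, F θ = (∑ x, p x * ℓ x θ) + γ * (θ ⬝ᵥ θ)
      + (η / 4) * ∑ b, q b *
          ((∑ x, c b x • grad (ℓ x) θ) ⬝ᵥ (∑ x, c b x • grad (ℓ x) θ)))
    (θstar : Fin n → ℝ) (hmin : IsLocalMin F θstar) :
    -η * (∑ b, q b *
        ((∑ x, c b x • grad (ℓ x) θstar) ⬝ᵥ
          ((2⁻¹ : ℝ) • (A + Aᵀ)).mulVec (∑ x, c b x • grad (ℓ x) θstar)))
      + 4 * γ * (θstar ⬝ᵥ ((2⁻¹ : ℝ) • (A + Aᵀ)).mulVec θstar) = 0 := by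
  classical
  have hdiff : ∀ x, Differentiable ℝ (ℓ x) := fun x => (hℓ x).differentiable (by norm_num)
  -- batch gradient at θstar
  set G : B → (Fin n → ℝ) := fun b => ∑ x, c b x • grad (ℓ x) θstar with hGdef
  -- gradient transformation along the symmetry flow
  have hGb : ∀ (b : B) (t : ℝ),
      (∑ x, c b x • grad (ℓ x) ((NormedSpace.exp (t • A)).mulVec θstar))
        = (NormedSpace.exp (t • (-Aᵀ))).mulVec (G b) := by
    intro b t
    have hx : ∀ x : X, grad (ℓ x) ((NormedSpace.exp (t • A)).mulVec θstar)
        = (NormedSpace.exp (t • (-Aᵀ))).mulVec (grad (ℓ x) θstar) := fun x =>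
      mbt_grad_shift (ℓ x) (hdiff x) A t θstar (fun θ' => hsym x t θ')
    simp_rw [hx, hGdef]
    rw [show (NormedSpace.exp (t • (-Aᵀ))).mulVec (∑ x, c b x • grad (ℓ x) θstar)
        = (NormedSpace.exp (t • (-Aᵀ))).mulVecLin (∑ x, c b x • grad (ℓ x) θstar) from rfl,
      map_sum]
    simp [Matrix.mulVecLin_apply]
  -- explicit form of F along the flow
  have hg_eq : ∀ t : ℝ, F ((NormedSpace.exp (t • A)).mulVec θstar)
      = (∑ x, p x * ℓ x θstar)
        + γ * ((NormedSpace.exp (t • A)).mulVec θstar ⬝ᵥ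
            (NormedSpace.exp (t • A)).mulVec θstar)
        + (η / 4) * ∑ b, q b *
            ((NormedSpace.exp (t • (-Aᵀ))).mulVec (G b) ⬝ᵥ
              (NormedSpace.exp (t • (-Aᵀ))).mulVec (G b)) := by
    intro t
    rw [hF]
    congr 2
    · exact Finset.sum_congr rfl fun x _ => by rw [hsym x t θstar]
    · exact Finset.sum_congr rfl fun b _ => by rw [hGb b t]
  -- local minimum along the flow
  have hglm : IsLocalMin (fun t : ℝ => F ((NormedSpace.exp (t • A)).mulVec θstar)) 0 := by
    have hφ0 : (NormedSpace.exp ((0:ℝ) • A)).mulVec θstar = θstar := by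
      simp [Matrix.one_mulVec]
    have hcont : ContinuousAt (fun t : ℝ => (NormedSpace.exp (t • A)).mulVec θstar) 0 :=
      continuousAt_pi.mpr fun i => (mbt_expMulVecDeriv A θstar i).continuousAt
    have ht : Filter.Tendsto (fun t : ℝ => (NormedSpace.exp (t • A)).mulVec θstar)
        (nhds 0) (nhds θstar) := by
      have := hcont.tendsto
      simpa [Matrix.one_mulVec] using this
    show ∀ᶠ t in nhds (0:ℝ), F ((NormedSpace.exp ((0:ℝ) • A)).mulVec θstar)
      ≤ F ((NormedSpace.exp (t • A)).mulVec θstar)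
    rw [hφ0]
    exact ht.eventually hmin
  -- derivative of the flow of F at 0
  set T : ℝ := A.mulVec θstar ⬝ᵥ θstar + θstar ⬝ᵥ A.mulVec θstar with hT
  set S : ℝ := ∑ b, q b * ((-Aᵀ).mulVec (G b) ⬝ᵥ G b + G b ⬝ᵥ (-Aᵀ).mulVec (G b)) with hS
  have hd3 : HasDerivAt (fun t : ℝ => ∑ b, q b *
      ((NormedSpace.exp (t • (-Aᵀ))).mulVec (G b) ⬝ᵥ
        (NormedSpace.exp (t • (-Aᵀ))).mulVec (G b))) S 0 := by
    rw [hS]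
    exact HasDerivAt.fun_sum fun b _ => (mbt_expDot (-Aᵀ) (G b)).const_mul (q b)
  have hgd : HasDerivAt (fun t : ℝ => F ((NormedSpace.exp (t • A)).mulVec θstar))
      (γ * T + (η / 4) * S) 0 := by
    have hbig := (((mbt_expDot A θstar).const_mul γ).const_add
        (∑ x, p x * ℓ x θstar)).add (hd3.const_mul (η / 4))
    have hfe : (fun t : ℝ => F ((NormedSpace.exp (t • A)).mulVec θstar))
        = fun t : ℝ => (∑ x, p x * ℓ x θstar)
        + γ * ((NormedSpace.exp (t • A)).mulVec θstar ⬝ᵥ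
            (NormedSpace.exp (t • A)).mulVec θstar)
        + (η / 4) * ∑ b, q b *
            ((NormedSpace.exp (t • (-Aᵀ))).mulVec (G b) ⬝ᵥ
              (NormedSpace.exp (t • (-Aᵀ))).mulVec (G b)) := funext hg_eq
    rw [hfe, hT]
    exact hbig
  have hzero : γ * T + (η / 4) * S = 0 := hglm.hasDerivAt_eq_zero hgd
  -- final algebra
  have h1 : ∑ b, q b * (G b ⬝ᵥ ((2⁻¹ : ℝ) • (A + Aᵀ)).mulVec (G b)) = -(2⁻¹) * S := by
    rw [hS, Finset.mul_sum]
    exact Finset.sum_congr rfl fun b _ => by rw [mbt_quad A (G b)]; ring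
  have h2 : θstar ⬝ᵥ ((2⁻¹ : ℝ) • (A + Aᵀ)).mulVec θstar = 2⁻¹ * T := by
    rw [hT]; exact mbt_quad' A θstar
  rw [show (∑ b, q b * ((∑ x, c b x • grad (ℓ x) θstar) ⬝ᵥ
      ((2⁻¹ : ℝ) • (A + Aᵀ)).mulVec (∑ x, c b x • grad (ℓ x) θstar)))
      = ∑ b, q b * (G b ⬝ᵥ ((2⁻¹ : ℝ) • (A + Aᵀ)).mulVec (G b)) from rfl, h1, h2]
  linear_combination 2 * hzero
end

section
/- (Layer balance without weight decay) Consider a deep network whose per-sample loss is invariant under the rescaling transformation W_i ↦ e^λ W_i, W_j ↦ e^{−λ} W_j for layers i ≠ j. Then at any local minimum of the entropic loss with γ = 0, the expected squared gradient norms of the two layers coincide: E Tr[g_i g_iᵀ] = E Tr[g_j g_jᵀ], where g_k denotes the minibatch gradient with respect to W_k. -/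
open Matrix Finset

/-- Gradient of a function of layered weights `θ : ∀ k, ℝ^{r k × s k}` with respect to the
`(a,b)` entry of layer `k`. -/
noncomputable def lgrad {D : ℕ} {r s : Fin D → ℕ}
    (f : (∀ k : Fin D, Fin (r k) → Fin (s k) → ℝ) → ℝ)
    (θ : ∀ k : Fin D, Fin (r k) → Fin (s k) → ℝ) (k : Fin D) :
    Fin (r k) → Fin (s k) → ℝ :=
  fun a b => fderiv ℝ f θ (Pi.single k (Pi.single a (Pi.single b 1)))

/-- (Layer balance without weight decay.)  If the per-sample loss is invariant under the
rescaling `W_i ↦ e^λ W_i`, `W_j ↦ e^{−λ} W_j` of two layers `i ≠ j`, then at any local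
minimum of the entropic loss (with `γ = 0`) the expected squared minibatch-gradient norms
of the two layers coincide: `E Tr[gᵢgᵢᵀ] = E Tr[gⱼgⱼᵀ]`. -/
theorem stmt9 {D : ℕ} {r s : Fin D → ℕ} {X B : Type} [Fintype X] [Fintype B]
    (p : X → ℝ) (hp : ∀ x, 0 ≤ p x) (hp1 : ∑ x, p x = 1)
    (q : B → ℝ) (hq : ∀ b, 0 ≤ q b) (hq1 : ∑ b, q b = 1)
    (c : B → X → ℝ) (hc : ∀ b x, 0 ≤ c b x) (hc1 : ∀ b, ∑ x, c b x = 1)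
    (ℓ : X → (∀ k : Fin D, Fin (r k) → Fin (s k) → ℝ) → ℝ)
    (hℓ : ∀ x, ContDiff ℝ 2 (ℓ x))
    (i j : Fin D) (hij : i ≠ j)
    (hsym : ∀ (x : X) (lam : ℝ) (θ : ∀ k : Fin D, Fin (r k) → Fin (s k) → ℝ),
      ℓ x (Function.update (Function.update θ i (Real.exp lam • θ i)) j
            (Real.exp (-lam) • θ j)) = ℓ x θ)
    (η : ℝ) (hη : 0 < η)
    (F : (∀ k : Fin D, Fin (r k) → Fin (s k) → ℝ) → ℝ)
    (hF : ∀ θ, F θ = (∑ x, p x * ℓ x θ)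
      + (η / 4) * ∑ b, q b * ∑ k : Fin D, ∑ a : Fin (r k), ∑ e : Fin (s k),
          (∑ x, c b x * lgrad (ℓ x) θ k a e) ^ 2)
    (θstar : ∀ k : Fin D, Fin (r k) → Fin (s k) → ℝ)
    (hmin : IsLocalMin F θstar) :
    ∑ b, q b * ∑ a : Fin (r i), ∑ e : Fin (s i),
        (∑ x, c b x * lgrad (ℓ x) θstar i a e) ^ 2
      = ∑ b, q b * ∑ a : Fin (r j), ∑ e : Fin (s j),
          (∑ x, c b x * lgrad (ℓ x) θstar j a e) ^ 2 := by
  classical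
  -- scaling factors
  set cc : Fin D → ℝ → ℝ := fun k lam =>
    if k = j then Real.exp (-lam) else if k = i then Real.exp lam else 1 with hccdef
  have hccpos : ∀ k lam, (0:ℝ) < cc k lam := by
    intro k lam
    simp only [hccdef]
    split_ifs <;> positivity
  -- the scaling map as a continuous linear map
  set L : ℝ → ((∀ k : Fin D, Fin (r k) → Fin (s k) → ℝ) →L[ℝ]
      (∀ k : Fin D, Fin (r k) → Fin (s k) → ℝ)) :=
    fun lam => ContinuousLinearMap.pi (fun k => cc k lam • ContinuousLinearMap.proj k) with hLdef
  have hLapp : ∀ lam θ k, L lam θ k = cc k lam • θ k := by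
    intro lam θ k; simp [hLdef]
  -- invariance of the loss along the orbit
  have hinv : ∀ x lam θ, ℓ x (L lam θ) = ℓ x θ := by
    intro x lam θ
    have h1 : L lam θ = Function.update (Function.update θ i (Real.exp lam • θ i)) j
        (Real.exp (-lam) • θ j) := by
      funext k
      rcases eq_or_ne k j with rfl | hkj
      · simp [hLapp, hccdef]
      · rcases eq_or_ne k i with rfl | hki
        · simp [hLapp, hccdef, hkj, Function.update_of_ne hkj]
        · simp [hLapp, hccdef, hkj, hki, Function.update_of_ne hkj, Function.update_of_ne hki]
    rw [h1, hsym]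
  have hdiff : ∀ x, Differentiable ℝ (ℓ x) := fun x => (hℓ x).differentiable two_ne_zero
  -- gradient scaling relation
  have hgrad : ∀ (x : X) (lam : ℝ) (k : Fin D) (a : Fin (r k)) (e : Fin (s k)),
      lgrad (ℓ x) (L lam θstar) k a e = (cc k lam)⁻¹ * lgrad (ℓ x) θstar k a e := by
    intro x lam k a e
    have hcomp : ℓ x = (ℓ x) ∘ (L lam) := by
      funext θ; simp [Function.comp, hinv]
    have hfd : fderiv ℝ (ℓ x) θstar
        = (fderiv ℝ (ℓ x) (L lam θstar)).comp (L lam : _ →L[ℝ] _) := by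
      conv_lhs => rw [hcomp]
      rw [fderiv_comp _ ((hdiff x) _) (L lam).differentiableAt, (L lam).fderiv]
    set v : ∀ k : Fin D, Fin (r k) → Fin (s k) → ℝ :=
      Pi.single k (Pi.single a (Pi.single e (1:ℝ))) with hv
    have hLv : (L lam) v = cc k lam • v := by
      funext k'
      rcases eq_or_ne k' k with rfl | hk
      · simp [hLapp]
      · simp [hLapp, hv, Pi.single_eq_of_ne hk]
    have h2 := congrArg (fun (f : _ →L[ℝ] ℝ) => f v) hfd
    simp only [ContinuousLinearMap.comp_apply] at h2
    rw [hLv, (fderiv ℝ (ℓ x) ((L lam) θstar)).map_smul] at h2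
    have hne : cc k lam ≠ 0 := ne_of_gt (hccpos k lam)
    show fderiv ℝ (ℓ x) (L lam θstar) v = (cc k lam)⁻¹ * fderiv ℝ (ℓ x) θstar v
    rw [h2, smul_eq_mul, inv_mul_cancel_left₀ hne]
  -- squared gradient norms per layer
  set S : (k : Fin D) → B → ℝ := fun k b =>
    ∑ a : Fin (r k), ∑ e : Fin (s k), (∑ x, c b x * lgrad (ℓ x) θstar k a e) ^ 2 with hS
  set ee : Fin D → ℝ → ℝ := fun k lam =>
    if k = j then Real.exp (2*lam) else if k = i then Real.exp ((-2)*lam) else 1 with heedef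
  have hccinv : ∀ k lam, ((cc k lam)⁻¹) ^ 2 = ee k lam := by
    intro k lam
    simp only [hccdef, heedef]
    split_ifs
    · rw [← Real.exp_neg, neg_neg, sq, ← Real.exp_add]; ring_nf
    · rw [← Real.exp_neg, sq, ← Real.exp_add]; ring_nf
    · simp
  -- the entropic loss along the orbit
  have hφ : ∀ lam, F (L lam θstar)
      = (∑ x, p x * ℓ x θstar) + (η/4) * ∑ b, q b * ∑ k, ee k lam * S k b := by
    intro lam
    rw [hF]
    congr 1
    · exact Finset.sum_congr rfl fun x _ => by rw [hinv]
    · congr 1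
      refine Finset.sum_congr rfl fun b _ => ?_
      congr 1
      refine Finset.sum_congr rfl fun k _ => ?_
      rw [← hccinv k lam]
      have hinner : ∀ (a : Fin (r k)) (e : Fin (s k)),
          (∑ x, c b x * lgrad (ℓ x) (L lam θstar) k a e)
            = (cc k lam)⁻¹ * ∑ x, c b x * lgrad (ℓ x) θstar k a e := by
        intro a e
        rw [Finset.mul_sum]
        exact Finset.sum_congr rfl fun x _ => by rw [hgrad]; ring
      simp only [hS]
      rw [Finset.mul_sum]
      refine Finset.sum_congr rfl fun a _ => ?_
      rw [Finset.mul_sum]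
      refine Finset.sum_congr rfl fun e _ => ?_
      rw [hinner, mul_pow]
  set φ : ℝ → ℝ := fun lam =>
    (∑ x, p x * ℓ x θstar) + (η/4) * ∑ b, q b * ∑ k, ee k lam * S k b with hφdef
  -- 0 is a local min of φ
  have h0 : L 0 θstar = θstar := by
    funext k
    rw [hLapp]
    have : cc k 0 = 1 := by simp only [hccdef]; split_ifs <;> simp
    rw [this, one_smul]
  have hcont : Continuous fun lam => L lam θstar := by
    apply continuous_pi; intro k
    have hrw : (fun lam => (L lam) θstar k) = fun lam => cc k lam • θstar k :=
      funext fun lam => hLapp lam θstar k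
    rw [hrw]
    refine Continuous.fun_smul ?_ continuous_const
    simp only [hccdef]
    rcases eq_or_ne k j with rfl | hkj
    · simp only [if_pos rfl, if_true]; fun_prop
    · rcases eq_or_ne k i with rfl | hki
      · simpa [hkj] using Real.continuous_exp
      · simp only [if_neg hkj, if_neg hki]
        exact continuous_const
  have hminφ : IsLocalMin φ 0 := by
    have h1 : IsLocalMin (F ∘ fun lam => L lam θstar) 0 := by
      refine IsMinFilter.comp_tendsto ?_ (hcont.continuousAt (x := 0))
      simp only [h0]; exact hmin
    have h2 : (F ∘ fun lam => L lam θstar) = φ := by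
      funext lam; simp only [Function.comp, hφdef]; exact hφ lam
    rwa [h2] at h1
  -- derivative of φ at 0
  set d : Fin D → ℝ := fun k => if k = j then 2 else if k = i then -2 else 0 with hddef
  have hek : ∀ k : Fin D, HasDerivAt (fun lam => ee k lam) (d k) 0 := by
    intro k
    simp only [heedef, hddef]
    rcases eq_or_ne k j with rfl | hkj
    · simp only [if_pos rfl]
      have := ((hasDerivAt_id (0:ℝ)).const_mul (2:ℝ)).exp
      simpa using this
    · rcases eq_or_ne k i with rfl | hki
      · simp only [if_neg hkj, if_pos rfl]
        have := ((hasDerivAt_id (0:ℝ)).const_mul (-2:ℝ)).exp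
        simpa using this
      · simp only [if_neg hkj, if_neg hki]
        exact hasDerivAt_const 0 1
  have hsum : ∀ b, HasDerivAt (fun lam => ∑ k, ee k lam * S k b) (∑ k, d k * S k b) 0 :=
    fun b => HasDerivAt.fun_sum (fun k _ => (hek k).mul_const (S k b))
  have hφd : HasDerivAt φ ((η/4) * ∑ b, q b * ∑ k, d k * S k b) 0 := by
    simp only [hφdef]
    exact (((HasDerivAt.fun_sum (fun b _ => (hsum b).const_mul (q b))).const_mul (η/4)).const_add _)
  have hder0 : deriv φ 0 = 0 := hminφ.deriv_eq_zero
  have hM0 : (η/4) * ∑ b, q b * ∑ k, d k * S k b = 0 := by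
    rw [← hφd.deriv, hder0]
  have hM : ∑ b, q b * ∑ k, d k * S k b = 0 := by
    have hne : (η/4) ≠ 0 := by positivity
    exact (mul_eq_zero.mp hM0).resolve_left hne
  have hperb : ∀ b, ∑ k, d k * S k b = 2 * S j b + (-2) * S i b := by
    intro b
    have h1 : ∀ k : Fin D, d k * S k b
        = (if k = j then 2 * S j b else 0) + (if k = i then (-2) * S i b else 0) := by
      intro k
      simp only [hddef]
      rcases eq_or_ne k j with rfl | hkj
      · simp [Ne.symm hij]
      · rcases eq_or_ne k i with rfl | hki
        · simp [hkj]
        · simp [hkj, hki]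
    rw [Finset.sum_congr rfl (fun k _ => h1 k), Finset.sum_add_distrib]
    rw [Finset.sum_ite_eq' Finset.univ j (fun _ => 2 * S j b),
        Finset.sum_ite_eq' Finset.univ i (fun _ => (-2) * S i b)]
    simp
  have hM2 : ∑ b, q b * (2 * S j b + (-2) * S i b) = 0 := by
    rw [← hM]
    exact Finset.sum_congr rfl fun b _ => by rw [hperb b]
  have hexpand : ∑ b, q b * (2 * S j b + (-2) * S i b)
      = 2 * (∑ b, q b * S j b) - 2 * (∑ b, q b * S i b) := by
    rw [Finset.mul_sum, Finset.mul_sum, ← Finset.sum_sub_distrib]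
    exact Finset.sum_congr rfl fun b _ => by ring
  have hfinal : ∑ b, q b * S i b = ∑ b, q b * S j b := by
    rw [hexpand] at hM2; linarith
  simpa only [hS] using hfinal
end

section
/- (Gradient alignment for factored layers) Suppose ℓ(x, W, U) = ℓ̃(x, WU) depends on matrices W and U only through the product WU. At any local minimum of F(W,U) = E ℓ + γ(‖W‖_F² + ‖U‖_F²) + (η/4) E_B ‖gradient‖², the matrix identity η E[G_Wᵀ G_W − G_U G_Uᵀ] = 4γ (WᵀW − U Uᵀ) holds, where G_W and G_U are the minibatch gradients with respect to W and U. -/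
open Matrix Finset

/-- Entrywise product of two rectangular arrays, `(W·U)_{ab} = Σ_t W_{at} U_{tb}`. -/
def matmulF {m k n : ℕ} (W : Fin m → Fin k → ℝ) (U : Fin k → Fin n → ℝ) :
    Fin m → Fin n → ℝ :=
  fun a b => ∑ t, W a t * U t b

/-- Gradient of the per-sample loss `ℓ̃(x, WU)` with respect to `W`. -/
noncomputable def gradW {m k n : ℕ} {X : Type}
    (ℓ : X → (Fin m → Fin n → ℝ) → ℝ) (x : X)
    (W : Fin m → Fin k → ℝ) (U : Fin k → Fin n → ℝ) : Fin m → Fin k → ℝ :=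
  fun a b => fderiv ℝ
    (fun p : (Fin m → Fin k → ℝ) × (Fin k → Fin n → ℝ) => ℓ x (matmulF p.1 p.2))
    (W, U) (Pi.single a (Pi.single b 1), 0)

/-- Gradient of the per-sample loss `ℓ̃(x, WU)` with respect to `U`. -/
noncomputable def gradU {m k n : ℕ} {X : Type}
    (ℓ : X → (Fin m → Fin n → ℝ) → ℝ) (x : X)
    (W : Fin m → Fin k → ℝ) (U : Fin k → Fin n → ℝ) : Fin k → Fin n → ℝ :=
  fun a b => fderiv ℝ
    (fun p : (Fin m → Fin k → ℝ) × (Fin k → Fin n → ℝ) => ℓ x (matmulF p.1 p.2))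
    (W, U) (0, Pi.single a (Pi.single b 1))

section aux
variable {m k n : ℕ}

lemma hasDerivAt_affine (c d : ℝ) : HasDerivAt (fun l : ℝ => c + l * d) d 0 := by
  simpa using ((hasDerivAt_id (0:ℝ)).mul_const d).const_add c

lemma contDiff_mm : ContDiff ℝ 2
    (fun p : (Fin m → Fin k → ℝ) × (Fin k → Fin n → ℝ) => matmulF p.1 p.2) := by
  apply contDiff_pi.2; intro a
  apply contDiff_pi.2; intro b
  apply ContDiff.sum; intro i _
  exact ((contDiff_pi.1 (contDiff_pi.1 contDiff_fst a) i)).mul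
        ((contDiff_pi.1 (contDiff_pi.1 contDiff_snd i) b))

lemma hasDerivAt_line_mm (W v1 : Fin m → Fin k → ℝ) (U v2 : Fin k → Fin n → ℝ) :
    HasDerivAt
      (fun l : ℝ => matmulF (fun a r => W a r + l * v1 a r) (fun r b => U r b + l * v2 r b))
      (fun a b => ∑ i, (v1 a i * U i b + W a i * v2 i b)) 0 := by
  rw [hasDerivAt_pi]; intro a
  rw [hasDerivAt_pi]; intro b
  simp only [matmulF]
  apply HasDerivAt.fun_sum; intro i _
  have h := (hasDerivAt_affine (W a i) (v1 a i)).fun_mul (hasDerivAt_affine (U i b) (v2 i b))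
  simpa using h

lemma hasDerivAt_line_pair (W v1 : Fin m → Fin k → ℝ) (U v2 : Fin k → Fin n → ℝ) :
    HasDerivAt
      (fun l : ℝ => ((fun a r => W a r + l * v1 a r, fun r b => U r b + l * v2 r b) :
        (Fin m → Fin k → ℝ) × (Fin k → Fin n → ℝ))) (v1, v2) 0 := by
  apply HasDerivAt.prodMk
  · rw [hasDerivAt_pi]; intro a; rw [hasDerivAt_pi]; intro r
    exact hasDerivAt_affine _ _
  · rw [hasDerivAt_pi]; intro r; rw [hasDerivAt_pi]; intro b
    exact hasDerivAt_affine _ _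

lemma fderiv_mm_apply (W v1 : Fin m → Fin k → ℝ) (U v2 : Fin k → Fin n → ℝ) :
    fderiv ℝ (fun p : (Fin m → Fin k → ℝ) × (Fin k → Fin n → ℝ) => matmulF p.1 p.2)
      (W, U) (v1, v2) = fun a b => ∑ i, (v1 a i * U i b + W a i * v2 i b) := by
  have hd : HasFDerivAt (fun p : (Fin m → Fin k → ℝ) × (Fin k → Fin n → ℝ) => matmulF p.1 p.2)
      (fderiv ℝ (fun p : (Fin m → Fin k → ℝ) × (Fin k → Fin n → ℝ) => matmulF p.1 p.2) (W, U))
      (W, U) :=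
    ((contDiff_mm.differentiable (by norm_num)) (W, U)).hasFDerivAt
  have h0 : ((fun a r => W a r + 0 * v1 a r, fun r b => U r b + 0 * v2 r b) :
      (Fin m → Fin k → ℝ) × (Fin k → Fin n → ℝ)) = (W, U) := by
    simp
  rw [← h0] at hd
  have hline := hd.comp_hasDerivAt 0 (hasDerivAt_line_pair W v1 U v2)
  have hline' : HasDerivAt
      (fun l : ℝ => matmulF (fun a r => W a r + l * v1 a r) (fun r b => U r b + l * v2 r b))
      (fderiv ℝ (fun p : (Fin m → Fin k → ℝ) × (Fin k → Fin n → ℝ) => matmulF p.1 p.2)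
        (W, U) (v1, v2)) 0 := by
    simpa [Function.comp_def] using hline
  exact hline'.unique (hasDerivAt_line_mm W v1 U v2)

lemma fderiv_comp_mm {X : Type} (ℓ : X → (Fin m → Fin n → ℝ) → ℝ)
    (hℓ : ∀ x, ContDiff ℝ 2 (ℓ x)) (x : X)
    (W v1 : Fin m → Fin k → ℝ) (U v2 : Fin k → Fin n → ℝ) :
    fderiv ℝ (fun p : (Fin m → Fin k → ℝ) × (Fin k → Fin n → ℝ) => ℓ x (matmulF p.1 p.2))
      (W, U) (v1, v2)
    = fderiv ℝ (ℓ x) (matmulF W U) (fun a b => ∑ i, (v1 a i * U i b + W a i * v2 i b)) := by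
  have hmm : DifferentiableAt ℝ
      (fun p : (Fin m → Fin k → ℝ) × (Fin k → Fin n → ℝ) => matmulF p.1 p.2) (W, U) :=
    (contDiff_mm.differentiable (by norm_num)) (W, U)
  have hl : DifferentiableAt ℝ (ℓ x) (matmulF W U) :=
    ((hℓ x).differentiable (by norm_num)) (matmulF W U)
  have hc : (fun p : (Fin m → Fin k → ℝ) × (Fin k → Fin n → ℝ) => ℓ x (matmulF p.1 p.2))
      = (ℓ x) ∘ (fun p : (Fin m → Fin k → ℝ) × (Fin k → Fin n → ℝ) => matmulF p.1 p.2) := rfl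
  rw [hc, fderiv_comp (W, U) hl hmm]
  rw [ContinuousLinearMap.coe_comp', Function.comp_apply, fderiv_mm_apply]

lemma gradW_eq {X : Type} (ℓ : X → (Fin m → Fin n → ℝ) → ℝ)
    (hℓ : ∀ x, ContDiff ℝ 2 (ℓ x)) (x : X)
    (W : Fin m → Fin k → ℝ) (U : Fin k → Fin n → ℝ) (a : Fin m) (r : Fin k) :
    gradW ℓ x W U a r
      = ∑ b, U r b * fderiv ℝ (ℓ x) (matmulF W U) (Pi.single a (Pi.single b 1)) := by
  rw [gradW, fderiv_comp_mm ℓ hℓ x]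
  have hdir : (fun a' b => ∑ i, ((Pi.single a (Pi.single r 1) : Fin m → Fin k → ℝ) a' i * U i b
        + W a' i * (0 : Fin k → Fin n → ℝ) i b))
      = ∑ b : Fin n, U r b • (Pi.single a (Pi.single b 1) : Fin m → Fin n → ℝ) := by
    funext a' b'
    by_cases h : a' = a <;>
      simp [h, Pi.single_apply, Finset.sum_apply, ite_mul, mul_ite,
        Finset.sum_ite_eq, Finset.sum_ite_eq']
  rw [hdir, map_sum]
  simp [smul_eq_mul]

lemma gradU_eq {X : Type} (ℓ : X → (Fin m → Fin n → ℝ) → ℝ)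
    (hℓ : ∀ x, ContDiff ℝ 2 (ℓ x)) (x : X)
    (W : Fin m → Fin k → ℝ) (U : Fin k → Fin n → ℝ) (r : Fin k) (b : Fin n) :
    gradU ℓ x W U r b
      = ∑ a, W a r * fderiv ℝ (ℓ x) (matmulF W U) (Pi.single a (Pi.single b 1)) := by
  rw [gradU, fderiv_comp_mm ℓ hℓ x]
  have hdir : (fun a' b' => ∑ i, ((0 : Fin m → Fin k → ℝ) a' i * U i b'
        + W a' i * (Pi.single r (Pi.single b 1) : Fin k → Fin n → ℝ) i b'))
      = ∑ a : Fin m, W a r • (Pi.single a (Pi.single b 1) : Fin m → Fin n → ℝ) := by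
    funext a' b'
    by_cases h : b' = b <;>
      simp [h, Pi.single_apply, Finset.sum_apply, apply_ite (fun f : Fin n → ℝ => f b'),
        apply_ite (fun f : Fin n → ℝ => f b),
        ite_mul, mul_ite, Finset.sum_ite_eq, Finset.sum_ite_eq']
  rw [hdir, map_sum]
  simp [smul_eq_mul]

end aux

lemma key {m k n : ℕ} {X B : Type} [Fintype X] [Fintype B]
    (p : X → ℝ) (q : B → ℝ) (c : B → X → ℝ)
    (ℓ : X → (Fin m → Fin n → ℝ) → ℝ) (hℓ : ∀ x, ContDiff ℝ 2 (ℓ x))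
    (η γ : ℝ)
    (F : (Fin m → Fin k → ℝ) × (Fin k → Fin n → ℝ) → ℝ)
    (hF : ∀ W U, F (W, U) = (∑ x, p x * ℓ x (matmulF W U))
      + γ * ((∑ a, ∑ b, (W a b) ^ 2) + (∑ a, ∑ b, (U a b) ^ 2))
      + (η / 4) * ∑ bt, q bt *
          ((∑ a, ∑ b, (∑ x, c bt x * gradW ℓ x W U a b) ^ 2)
            + (∑ a, ∑ b, (∑ x, c bt x * gradU ℓ x W U a b) ^ 2)))
    (W : Fin m → Fin k → ℝ) (U : Fin k → Fin n → ℝ)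
    (hmin : IsLocalMin F (W, U)) (s t : Fin k) :
    η * ∑ bt, q bt *
        ((∑ a, (∑ x, c bt x * gradW ℓ x W U a s) * (∑ x, c bt x * gradW ℓ x W U a t))
          - (∑ b, (∑ x, c bt x * gradU ℓ x W U s b) * (∑ x, c bt x * gradU ℓ x W U t b)))
      = 4 * γ * ((∑ a, W a s * W a t) - (∑ b, U s b * U t b)) := by
  classical
  set v1 : Fin m → Fin k → ℝ := fun a r => -(W a s * (if r = t then 1 else 0)) with hv1
  set v2 : Fin k → Fin n → ℝ := fun r b => (if r = s then 1 else 0) * U t b with hv2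
  -- curve invariance of the product to first order
  have hMc : HasDerivAt (fun l : ℝ => matmulF (fun a r => W a r + l * v1 a r)
      (fun r b => U r b + l * v2 r b)) 0 0 := by
    have h := hasDerivAt_line_mm W v1 U v2
    have hz : (fun a b => ∑ i, (v1 a i * U i b + W a i * v2 i b))
        = (0 : Fin m → Fin n → ℝ) := by
      funext a b
      simp [hv1, hv2, ite_mul, mul_ite, neg_mul, Finset.sum_add_distrib,
        Finset.sum_ite_eq, Finset.sum_ite_eq']
    rwa [hz] at h
  have hMc0 : matmulF (fun a r => W a r + (0:ℝ) * v1 a r)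
      (fun r b => U r b + (0:ℝ) * v2 r b) = matmulF W U := by
    congr 1 <;> funext i j <;> simp
  have hcW0 : (fun a r => W a r + (0:ℝ) * v1 a r) = W := by funext a r; simp
  have hcU0 : (fun r b => U r b + (0:ℝ) * v2 r b) = U := by funext r b; simp
  -- the fderiv of ℓ x has zero derivative along the curve
  have hgder : ∀ (x : X) (v : Fin m → Fin n → ℝ),
      HasDerivAt (fun l : ℝ => fderiv ℝ (ℓ x)
        (matmulF (fun a r => W a r + l * v1 a r) (fun r b => U r b + l * v2 r b)) v) 0 0 := by
    intro x v
    have h1 : ContDiff ℝ 1 (fderiv ℝ (ℓ x)) := (hℓ x).fderiv_right (by norm_num)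
    have h2 : HasFDerivAt (fderiv ℝ (ℓ x))
        (fderiv ℝ (fderiv ℝ (ℓ x)) (matmulF W U)) (matmulF W U) :=
      ((h1.differentiable (by norm_num)) (matmulF W U)).hasFDerivAt
    rw [← hMc0] at h2
    have h3 := h2.comp_hasDerivAt 0 hMc
    have h4 : HasDerivAt (fun l : ℝ => fderiv ℝ (ℓ x)
        (matmulF (fun a r => W a r + l * v1 a r) (fun r b => U r b + l * v2 r b)))
        0 0 := by simpa [Function.comp_def] using h3
    have h5 := h4.clm_apply (hasDerivAt_const (0:ℝ) v)
    simpa using h5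
  -- derivative of the minibatch gradW entries along the curve
  have hGW : ∀ (bt : B) (a : Fin m) (r : Fin k),
      HasDerivAt (fun l : ℝ => ∑ x, c bt x * gradW ℓ x
          (fun a' r' => W a' r' + l * v1 a' r') (fun r' b' => U r' b' + l * v2 r' b') a r)
        ((if r = s then 1 else 0) * ∑ x, c bt x * gradW ℓ x W U a t) 0 := by
    intro bt a r
    have hx : ∀ x : X, HasDerivAt (fun l : ℝ => gradW ℓ x
        (fun a' r' => W a' r' + l * v1 a' r') (fun r' b' => U r' b' + l * v2 r' b') a r)
        ((if r = s then 1 else 0) * gradW ℓ x W U a t) 0 := by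
      intro x
      have hrw : (fun l : ℝ => gradW ℓ x
          (fun a' r' => W a' r' + l * v1 a' r') (fun r' b' => U r' b' + l * v2 r' b') a r)
          = fun l : ℝ => ∑ b, (U r b + l * v2 r b) * fderiv ℝ (ℓ x)
              (matmulF (fun a' r' => W a' r' + l * v1 a' r')
                (fun r' b' => U r' b' + l * v2 r' b')) (Pi.single a (Pi.single b 1)) := by
        funext l; exact gradW_eq ℓ hℓ x _ _ a r
      rw [hrw]
      have hsum : HasDerivAt (fun l : ℝ => ∑ b, (U r b + l * v2 r b) * fderiv ℝ (ℓ x)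
              (matmulF (fun a' r' => W a' r' + l * v1 a' r')
                (fun r' b' => U r' b' + l * v2 r' b')) (Pi.single a (Pi.single b 1)))
          (∑ b, v2 r b * fderiv ℝ (ℓ x) (matmulF W U) (Pi.single a (Pi.single b 1))) 0 := by
        apply HasDerivAt.fun_sum; intro b _
        have h1 := (hasDerivAt_affine (U r b) (v2 r b)).mul
          (hgder x (Pi.single a (Pi.single b 1)))
        have h1' : HasDerivAt (fun l : ℝ => (U r b + l * v2 r b) * fderiv ℝ (ℓ x)
              (matmulF (fun a' r' => W a' r' + l * v1 a' r')
                (fun r' b' => U r' b' + l * v2 r' b')) (Pi.single a (Pi.single b 1)))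
            (v2 r b * fderiv ℝ (ℓ x)
              (matmulF (fun a' r' => W a' r' + (0:ℝ) * v1 a' r')
                (fun r' b' => U r' b' + (0:ℝ) * v2 r' b')) (Pi.single a (Pi.single b 1))
              + (U r b + 0 * v2 r b) * 0) 0 := h1
        rw [hMc0] at h1'
        simpa using h1'
      have hval : (∑ b, v2 r b * fderiv ℝ (ℓ x) (matmulF W U) (Pi.single a (Pi.single b 1)))
          = (if r = s then 1 else 0) * gradW ℓ x W U a t := by
        rw [gradW_eq ℓ hℓ x W U a t, Finset.mul_sum]
        refine Finset.sum_congr rfl fun b _ => ?_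
        simp only [hv2]; ring
      rw [hval] at hsum
      exact hsum
    have h := HasDerivAt.fun_sum (u := Finset.univ) (fun x _ => (hx x).const_mul (c bt x))
    have he : (∑ x, c bt x * ((if r = s then 1 else 0) * gradW ℓ x W U a t))
        = (if r = s then 1 else 0) * ∑ x, c bt x * gradW ℓ x W U a t := by
      rw [Finset.mul_sum]; exact Finset.sum_congr rfl fun x _ => by ring
    rw [he] at h
    exact h
  -- derivative of the minibatch gradU entries along the curve
  have hGU : ∀ (bt : B) (r : Fin k) (b : Fin n),
      HasDerivAt (fun l : ℝ => ∑ x, c bt x * gradU ℓ x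
          (fun a' r' => W a' r' + l * v1 a' r') (fun r' b' => U r' b' + l * v2 r' b') r b)
        (-((if r = t then 1 else 0) * ∑ x, c bt x * gradU ℓ x W U s b)) 0 := by
    intro bt r b
    have hx : ∀ x : X, HasDerivAt (fun l : ℝ => gradU ℓ x
        (fun a' r' => W a' r' + l * v1 a' r') (fun r' b' => U r' b' + l * v2 r' b') r b)
        (-((if r = t then 1 else 0) * gradU ℓ x W U s b)) 0 := by
      intro x
      have hrw : (fun l : ℝ => gradU ℓ x
          (fun a' r' => W a' r' + l * v1 a' r') (fun r' b' => U r' b' + l * v2 r' b') r b)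
          = fun l : ℝ => ∑ a, (W a r + l * v1 a r) * fderiv ℝ (ℓ x)
              (matmulF (fun a' r' => W a' r' + l * v1 a' r')
                (fun r' b' => U r' b' + l * v2 r' b')) (Pi.single a (Pi.single b 1)) := by
        funext l; exact gradU_eq ℓ hℓ x _ _ r b
      rw [hrw]
      have hsum : HasDerivAt (fun l : ℝ => ∑ a, (W a r + l * v1 a r) * fderiv ℝ (ℓ x)
              (matmulF (fun a' r' => W a' r' + l * v1 a' r')
                (fun r' b' => U r' b' + l * v2 r' b')) (Pi.single a (Pi.single b 1)))
          (∑ a, v1 a r * fderiv ℝ (ℓ x) (matmulF W U) (Pi.single a (Pi.single b 1))) 0 := by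
        apply HasDerivAt.fun_sum; intro a _
        have h1 := (hasDerivAt_affine (W a r) (v1 a r)).mul
          (hgder x (Pi.single a (Pi.single b 1)))
        have h1' : HasDerivAt (fun l : ℝ => (W a r + l * v1 a r) * fderiv ℝ (ℓ x)
              (matmulF (fun a' r' => W a' r' + l * v1 a' r')
                (fun r' b' => U r' b' + l * v2 r' b')) (Pi.single a (Pi.single b 1)))
            (v1 a r * fderiv ℝ (ℓ x)
              (matmulF (fun a' r' => W a' r' + (0:ℝ) * v1 a' r')
                (fun r' b' => U r' b' + (0:ℝ) * v2 r' b')) (Pi.single a (Pi.single b 1))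
              + (W a r + 0 * v1 a r) * 0) 0 := h1
        rw [hMc0] at h1'
        simpa using h1'
      have hval : (∑ a, v1 a r * fderiv ℝ (ℓ x) (matmulF W U) (Pi.single a (Pi.single b 1)))
          = -((if r = t then 1 else 0) * gradU ℓ x W U s b) := by
        rw [gradU_eq ℓ hℓ x W U s b, Finset.mul_sum, ← Finset.sum_neg_distrib]
        refine Finset.sum_congr rfl fun a _ => ?_
        simp only [hv1]; ring
      rw [hval] at hsum
      exact hsum
    have h := HasDerivAt.fun_sum (u := Finset.univ) (fun x _ => (hx x).const_mul (c bt x))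
    have he : (∑ x, c bt x * -((if r = t then 1 else 0) * gradU ℓ x W U s b))
        = -((if r = t then 1 else 0) * ∑ x, c bt x * gradU ℓ x W U s b) := by
      rw [Finset.mul_sum, ← Finset.sum_neg_distrib]
      exact Finset.sum_congr rfl fun x _ => by ring
    rw [he] at h
    exact h
  -- term 1: invariant to first order
  have hT1 : HasDerivAt (fun l : ℝ => ∑ x, p x * ℓ x
      (matmulF (fun a r => W a r + l * v1 a r) (fun r b => U r b + l * v2 r b))) 0 0 := by
    have hx : ∀ x : X, HasDerivAt (fun l : ℝ => ℓ x
        (matmulF (fun a r => W a r + l * v1 a r) (fun r b => U r b + l * v2 r b))) 0 0 := by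
      intro x
      have hl2 : HasFDerivAt (ℓ x) (fderiv ℝ (ℓ x) (matmulF W U)) (matmulF W U) :=
        (((hℓ x).differentiable (by norm_num)) (matmulF W U)).hasFDerivAt
      rw [← hMc0] at hl2
      have h3 := hl2.comp_hasDerivAt 0 hMc
      simpa [Function.comp_def] using h3
    have h := HasDerivAt.fun_sum (u := Finset.univ) (fun x _ => (hx x).const_mul (p x))
    simpa using h
  -- term 2: the regularizer
  have hT2 : HasDerivAt (fun l : ℝ => γ *
      ((∑ a, ∑ r, (W a r + l * v1 a r) ^ 2) + (∑ r, ∑ b, (U r b + l * v2 r b) ^ 2)))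
      (γ * ((∑ a, ∑ r, 2 * W a r * v1 a r) + (∑ r, ∑ b, 2 * U r b * v2 r b))) 0 := by
    apply HasDerivAt.const_mul
    apply HasDerivAt.add
    · apply HasDerivAt.fun_sum; intro a _
      apply HasDerivAt.fun_sum; intro r _
      have h := (hasDerivAt_affine (W a r) (v1 a r)).fun_pow 2
      simpa using h
    · apply HasDerivAt.fun_sum; intro r _
      apply HasDerivAt.fun_sum; intro b _
      have h := (hasDerivAt_affine (U r b) (v2 r b)).fun_pow 2
      simpa using h
  -- term 3: the gradient penalty
  have hT3 : HasDerivAt (fun l : ℝ => (η / 4) * ∑ bt, q bt *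
      ((∑ a, ∑ r, (∑ x, c bt x * gradW ℓ x (fun a' r' => W a' r' + l * v1 a' r')
          (fun r' b' => U r' b' + l * v2 r' b') a r) ^ 2)
        + (∑ r, ∑ b, (∑ x, c bt x * gradU ℓ x (fun a' r' => W a' r' + l * v1 a' r')
          (fun r' b' => U r' b' + l * v2 r' b') r b) ^ 2)))
      ((η / 4) * ∑ bt, q bt *
      ((∑ a, ∑ r, 2 * (∑ x, c bt x * gradW ℓ x W U a r) *
          ((if r = s then 1 else 0) * ∑ x, c bt x * gradW ℓ x W U a t))
        + (∑ r, ∑ b, 2 * (∑ x, c bt x * gradU ℓ x W U r b) *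
          (-((if r = t then 1 else 0) * ∑ x, c bt x * gradU ℓ x W U s b))))) 0 := by
    apply HasDerivAt.const_mul
    apply HasDerivAt.fun_sum; intro bt _
    apply HasDerivAt.const_mul
    apply HasDerivAt.add
    · apply HasDerivAt.fun_sum; intro a _
      apply HasDerivAt.fun_sum; intro r _
      have h := (hGW bt a r).pow 2
      have h' : HasDerivAt (fun l : ℝ => (∑ x, c bt x * gradW ℓ x
            (fun a' r' => W a' r' + l * v1 a' r') (fun r' b' => U r' b' + l * v2 r' b') a r) ^ 2)
          ((2:ℝ) * (∑ x, c bt x * gradW ℓ x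
            (fun a' r' => W a' r' + (0:ℝ) * v1 a' r')
            (fun r' b' => U r' b' + (0:ℝ) * v2 r' b') a r) ^ (2-1)
            * ((if r = s then 1 else 0) * ∑ x, c bt x * gradW ℓ x W U a t)) 0 := h
      rw [hcW0, hcU0] at h'
      simpa using h'
    · apply HasDerivAt.fun_sum; intro r _
      apply HasDerivAt.fun_sum; intro b _
      have h := (hGU bt r b).pow 2
      have h' : HasDerivAt (fun l : ℝ => (∑ x, c bt x * gradU ℓ x
            (fun a' r' => W a' r' + l * v1 a' r') (fun r' b' => U r' b' + l * v2 r' b') r b) ^ 2)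
          ((2:ℝ) * (∑ x, c bt x * gradU ℓ x
            (fun a' r' => W a' r' + (0:ℝ) * v1 a' r')
            (fun r' b' => U r' b' + (0:ℝ) * v2 r' b') r b) ^ (2-1)
            * (-((if r = t then 1 else 0) * ∑ x, c bt x * gradU ℓ x W U s b))) 0 := h
      rw [hcW0, hcU0] at h'
      simpa using h'
  -- assemble
  have hφ := (hT1.add hT2).add hT3
  have hlocal : IsLocalMin (fun l : ℝ => F
      (fun a r => W a r + l * v1 a r, fun r b => U r b + l * v2 r b)) 0 := by
    have hcont := (hasDerivAt_line_pair W v1 U v2).continuousAt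
    have h0 : ((fun a r => W a r + (0:ℝ) * v1 a r, fun r b => U r b + (0:ℝ) * v2 r b) :
        (Fin m → Fin k → ℝ) × (Fin k → Fin n → ℝ)) = (W, U) := by
      rw [hcW0, hcU0]
    rw [← h0] at hmin
    exact IsLocalMin.comp_continuous
      (g := fun l : ℝ => ((fun a r => W a r + l * v1 a r, fun r b => U r b + l * v2 r b) :
        (Fin m → Fin k → ℝ) × (Fin k → Fin n → ℝ))) (b := 0) hmin hcont
  have hfun : (fun l : ℝ => F
      (fun a r => W a r + l * v1 a r, fun r b => U r b + l * v2 r b))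
      = fun l : ℝ => (∑ x, p x * ℓ x (matmulF (fun a r => W a r + l * v1 a r)
          (fun r b => U r b + l * v2 r b)))
        + γ * ((∑ a, ∑ r, (W a r + l * v1 a r) ^ 2) + (∑ r, ∑ b, (U r b + l * v2 r b) ^ 2))
        + (η / 4) * ∑ bt, q bt *
          ((∑ a, ∑ r, (∑ x, c bt x * gradW ℓ x (fun a' r' => W a' r' + l * v1 a' r')
              (fun r' b' => U r' b' + l * v2 r' b') a r) ^ 2)
            + (∑ r, ∑ b, (∑ x, c bt x * gradU ℓ x (fun a' r' => W a' r' + l * v1 a' r')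
              (fun r' b' => U r' b' + l * v2 r' b') r b) ^ 2)) :=
    funext fun l => hF _ _
  rw [hfun] at hlocal
  have hD := hlocal.hasDerivAt_eq_zero hφ
  rw [zero_add] at hD
  have hA : (∑ a, ∑ r, 2 * W a r * v1 a r) = -2 * ∑ a, W a s * W a t := by
    refine Eq.trans (Finset.sum_congr rfl fun a _ => ?_) (Finset.mul_sum _ _ _).symm
    rw [Finset.sum_congr rfl (fun r _ => show 2 * W a r * v1 a r
      = (if r = t then -(2 * (W a s * W a r)) else 0) from by
        simp only [hv1]; split <;> ring)]
    rw [Finset.sum_ite_eq' Finset.univ t]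
    simp only [Finset.mem_univ, if_true]
    ring
  have hB : (∑ r, ∑ b, 2 * U r b * v2 r b) = 2 * ∑ b, U s b * U t b := by
    have hBr : ∀ r, (∑ b, 2 * U r b * v2 r b)
        = (if r = s then (∑ b, 2 * (U r b * U t b)) else 0) := by
      intro r
      by_cases h : r = s
      · simp only [hv2, if_pos h]
        exact Finset.sum_congr rfl fun b _ => by ring
      · simp only [hv2, if_neg h]
        simp
    rw [Finset.sum_congr rfl fun r _ => hBr r, Finset.sum_ite_eq' Finset.univ s]
    simp only [Finset.mem_univ, if_true]
    exact (Finset.mul_sum _ _ _).symm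
  have hSW : ∀ bt, (∑ a, ∑ r, 2 * (∑ x, c bt x * gradW ℓ x W U a r) *
        ((if r = s then 1 else 0) * ∑ x, c bt x * gradW ℓ x W U a t))
      = 2 * ∑ a, (∑ x, c bt x * gradW ℓ x W U a s) * (∑ x, c bt x * gradW ℓ x W U a t) := by
    intro bt
    refine Eq.trans (Finset.sum_congr rfl fun a _ => ?_) (Finset.mul_sum _ _ _).symm
    rw [Finset.sum_congr rfl (fun r _ => show 2 * (∑ x, c bt x * gradW ℓ x W U a r) *
        ((if r = s then 1 else 0) * ∑ x, c bt x * gradW ℓ x W U a t)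
        = (if r = s then 2 * ((∑ x, c bt x * gradW ℓ x W U a r)
            * (∑ x, c bt x * gradW ℓ x W U a t)) else 0) from by split <;> ring)]
    rw [Finset.sum_ite_eq' Finset.univ s]
    simp only [Finset.mem_univ, if_true]
  have hSU : ∀ bt, (∑ r, ∑ b, 2 * (∑ x, c bt x * gradU ℓ x W U r b) *
        (-((if r = t then 1 else 0) * ∑ x, c bt x * gradU ℓ x W U s b)))
      = -2 * ∑ b, (∑ x, c bt x * gradU ℓ x W U s b) * (∑ x, c bt x * gradU ℓ x W U t b) := by
    intro bt
    have hr : ∀ r, (∑ b, 2 * (∑ x, c bt x * gradU ℓ x W U r b) *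
          (-((if r = t then 1 else 0) * ∑ x, c bt x * gradU ℓ x W U s b)))
        = (if r = t then (∑ b, -(2 * ((∑ x, c bt x * gradU ℓ x W U r b)
            * (∑ x, c bt x * gradU ℓ x W U s b)))) else 0) := by
      intro r
      by_cases h : r = t
      · simp only [if_pos h]
        exact Finset.sum_congr rfl fun b _ => by ring
      · simp only [if_neg h]
        simp
    rw [Finset.sum_congr rfl fun r _ => hr r, Finset.sum_ite_eq' Finset.univ t]
    simp only [Finset.mem_univ, if_true]
    refine Eq.trans (Finset.sum_congr rfl fun b _ => show
        -(2 * ((∑ x, c bt x * gradU ℓ x W U t b) * ∑ x, c bt x * gradU ℓ x W U s b))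
        = -2 * ((∑ x, c bt x * gradU ℓ x W U s b) * (∑ x, c bt x * gradU ℓ x W U t b))
      from by ring) ?_
    exact (Finset.mul_sum _ _ _).symm
  rw [hA, hB] at hD
  have hS : (∑ bt, q bt *
      ((∑ a, ∑ r, 2 * (∑ x, c bt x * gradW ℓ x W U a r) *
          ((if r = s then 1 else 0) * ∑ x, c bt x * gradW ℓ x W U a t))
        + (∑ r, ∑ b, 2 * (∑ x, c bt x * gradU ℓ x W U r b) *
          (-((if r = t then 1 else 0) * ∑ x, c bt x * gradU ℓ x W U s b)))))
      = 2 * ∑ bt, q bt *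
        ((∑ a, (∑ x, c bt x * gradW ℓ x W U a s) * (∑ x, c bt x * gradW ℓ x W U a t))
          - (∑ b, (∑ x, c bt x * gradU ℓ x W U s b) * (∑ x, c bt x * gradU ℓ x W U t b))) := by
    refine Eq.trans (Finset.sum_congr rfl fun bt _ => ?_) (Finset.mul_sum _ _ _).symm
    rw [hSW bt, hSU bt]
    ring
  rw [hS] at hD
  linear_combination (2 : ℝ) * hD

/-- (Gradient alignment for factored layers.)  If the loss depends on `(W,U)` only through
`WU`, then at any local minimum of the entropic loss `F`,
`η E[G_Wᵀ G_W − G_U G_Uᵀ] = 4γ (WᵀW − UUᵀ)`. -/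
theorem stmt10 {m k n : ℕ} {X B : Type} [Fintype X] [Fintype B]
    (p : X → ℝ) (hp : ∀ x, 0 ≤ p x) (hp1 : ∑ x, p x = 1)
    (q : B → ℝ) (hq : ∀ b, 0 ≤ q b) (hq1 : ∑ b, q b = 1)
    (c : B → X → ℝ) (hc : ∀ b x, 0 ≤ c b x) (hc1 : ∀ b, ∑ x, c b x = 1)
    (ℓ : X → (Fin m → Fin n → ℝ) → ℝ) (hℓ : ∀ x, ContDiff ℝ 2 (ℓ x))
    (η γ : ℝ)
    (F : (Fin m → Fin k → ℝ) × (Fin k → Fin n → ℝ) → ℝ)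
    (hF : ∀ W U, F (W, U) = (∑ x, p x * ℓ x (matmulF W U))
      + γ * ((∑ a, ∑ b, (W a b) ^ 2) + (∑ a, ∑ b, (U a b) ^ 2))
      + (η / 4) * ∑ bt, q bt *
          ((∑ a, ∑ b, (∑ x, c bt x * gradW ℓ x W U a b) ^ 2)
            + (∑ a, ∑ b, (∑ x, c bt x * gradU ℓ x W U a b) ^ 2)))
    (W : Fin m → Fin k → ℝ) (U : Fin k → Fin n → ℝ)
    (hmin : IsLocalMin F (W, U)) :
    η • (∑ bt, q bt •
        ((Matrix.of (fun a b => ∑ x, c bt x * gradW ℓ x W U a b))ᵀ *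
            (Matrix.of (fun a b => ∑ x, c bt x * gradW ℓ x W U a b))
          - (Matrix.of (fun a b => ∑ x, c bt x * gradU ℓ x W U a b)) *
            (Matrix.of (fun a b => ∑ x, c bt x * gradU ℓ x W U a b))ᵀ))
      = (4 * γ) • ((Matrix.of W)ᵀ * Matrix.of W - Matrix.of U * (Matrix.of U)ᵀ) := by
  have hkey := key p q c ℓ hℓ η γ F hF W U hmin
  ext s t
  simp only [Matrix.smul_apply, Matrix.sum_apply, Matrix.sub_apply, Matrix.mul_apply,
    Matrix.transpose_apply, Matrix.of_apply, smul_eq_mul]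
  exact hkey s t
end

section
/- (Polynomial network neuron imbalance) In a network with activation h ↦ h^d, the loss is invariant under w_{i,j,:} ↦ e^λ w_{i,j,:}, w_{i+1,:,j} ↦ e^{−dλ} w_{i+1,:,j}. Hence at any local minimum of the entropic loss with γ = 0, E Tr[g_{i,j,:} g_{i,j,:}ᵀ] = d · E Tr[g_{i+1,:,j} g_{i+1,:,j}ᵀ]: the incoming-gradient second moment of each neuron equals d times the outgoing one. -/
open Finset

/-- Parameters split into a neuron's incoming weights, its outgoing weights, and the rest. -/
abbrev Params (P Q s : ℕ) := (Fin P → ℝ) × (Fin Q → ℝ) × (Fin s → ℝ)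

/-- Gradient with respect to the incoming weights of the neuron. -/
noncomputable def gIn {P Q s : ℕ} (f : Params P Q s → ℝ) (θ : Params P Q s) :
    Fin P → ℝ :=
  fun i => fderiv ℝ f θ (Pi.single i 1, 0, 0)

/-- Gradient with respect to the outgoing weights of the neuron. -/
noncomputable def gOut {P Q s : ℕ} (f : Params P Q s → ℝ) (θ : Params P Q s) :
    Fin Q → ℝ :=
  fun i => fderiv ℝ f θ (0, Pi.single i 1, 0)

/-- Gradient with respect to the remaining parameters. -/
noncomputable def gRest {P Q s : ℕ} (f : Params P Q s → ℝ) (θ : Params P Q s) :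
    Fin s → ℝ :=
  fun i => fderiv ℝ f θ (0, 0, Pi.single i 1)

noncomputable def Smap (P Q s : ℕ) (d lam : ℝ) : Params P Q s →L[ℝ] Params P Q s :=
  (Real.exp lam • ContinuousLinearMap.id ℝ (Fin P → ℝ)).prodMap
    ((Real.exp (-(d * lam)) • ContinuousLinearMap.id ℝ (Fin Q → ℝ)).prodMap
      (ContinuousLinearMap.id ℝ (Fin s → ℝ)))

lemma Smap_apply (P Q s : ℕ) (d lam : ℝ) (θ : Params P Q s) :
    Smap P Q s d lam θ = (Real.exp lam • θ.1, Real.exp (-(d*lam)) • θ.2.1, θ.2.2) := rfl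

lemma fderiv_Smap {P Q s : ℕ} (d lam : ℝ) (f : Params P Q s → ℝ)
    (hf : Differentiable ℝ f)
    (hsym : ∀ θ : Params P Q s, f (Smap P Q s d lam θ) = f θ)
    (θ vv : Params P Q s) :
    fderiv ℝ f θ vv = fderiv ℝ f (Smap P Q s d lam θ) (Smap P Q s d lam vv) := by
  have h1 : f ∘ (Smap P Q s d lam) = f := funext hsym
  have h2 : fderiv ℝ (f ∘ Smap P Q s d lam) θ = fderiv ℝ f θ := by rw [h1]
  rw [← h2, fderiv_comp θ (hf _) (Smap P Q s d lam).differentiableAt,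
    (Smap P Q s d lam).fderiv]
  rfl

section
variable {P Q s : ℕ} {d lam : ℝ} {f : Params P Q s → ℝ}
  (hf : Differentiable ℝ f)
  (hsym : ∀ θ : Params P Q s, f (Smap P Q s d lam θ) = f θ)
  (θ : Params P Q s)

include hf hsym

lemma gIn_Smap (i : Fin P) :
    gIn f (Smap P Q s d lam θ) i = Real.exp (-lam) * gIn f θ i := by
  have h := fderiv_Smap d lam f hf hsym θ (Pi.single i 1, 0, 0)
  have h2 : (Smap P Q s d lam) ((Pi.single i 1 : Fin P → ℝ), (0 : Fin Q → ℝ), (0 : Fin s → ℝ))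
      = Real.exp lam • ((Pi.single i 1 : Fin P → ℝ), (0 : Fin Q → ℝ), (0 : Fin s → ℝ)) := by
    rw [Smap_apply]
    simp [Prod.smul_mk, smul_zero]
  rw [h2, map_smul] at h
  have h3 : gIn f θ i = Real.exp lam * gIn f (Smap P Q s d lam θ) i := h
  rw [h3, Real.exp_neg]
  field_simp

lemma gOut_Smap (i : Fin Q) :
    gOut f (Smap P Q s d lam θ) i = Real.exp (d * lam) * gOut f θ i := by
  have h := fderiv_Smap d lam f hf hsym θ (0, Pi.single i 1, 0)
  have h2 : (Smap P Q s d lam) ((0 : Fin P → ℝ), (Pi.single i 1 : Fin Q → ℝ), (0 : Fin s → ℝ))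
      = Real.exp (-(d*lam)) • ((0 : Fin P → ℝ), (Pi.single i 1 : Fin Q → ℝ), (0 : Fin s → ℝ)) := by
    rw [Smap_apply]
    simp [Prod.smul_mk, smul_zero]
  rw [h2, map_smul] at h
  have h3 : gOut f θ i = Real.exp (-(d*lam)) * gOut f (Smap P Q s d lam θ) i := h
  rw [h3, ← mul_assoc, ← Real.exp_add]
  simp

lemma gRest_Smap (i : Fin s) :
    gRest f (Smap P Q s d lam θ) i = gRest f θ i := by
  have h := fderiv_Smap d lam f hf hsym θ (0, 0, Pi.single i 1)
  have h2 : (Smap P Q s d lam) ((0 : Fin P → ℝ), (0 : Fin Q → ℝ), (Pi.single i 1 : Fin s → ℝ))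
      = ((0 : Fin P → ℝ), (0 : Fin Q → ℝ), (Pi.single i 1 : Fin s → ℝ)) := by
    rw [Smap_apply]; simp
  rw [h2] at h
  exact h.symm

end

/-- (Polynomial network neuron imbalance.)  If the loss is invariant under
`w_in ↦ e^λ w_in, w_out ↦ e^{−dλ} w_out`, then at any local minimum of the entropic loss
with `γ = 0`, `E Tr[g_in g_inᵀ] = d · E Tr[g_out g_outᵀ]`. -/
theorem stmt12 {P Q s : ℕ} {X B : Type} [Fintype X] [Fintype B]
    (p : X → ℝ) (hp : ∀ x, 0 ≤ p x) (hp1 : ∑ x, p x = 1)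
    (q : B → ℝ) (hq : ∀ b, 0 ≤ q b) (hq1 : ∑ b, q b = 1)
    (c : B → X → ℝ) (hc : ∀ b x, 0 ≤ c b x) (hc1 : ∀ b, ∑ x, c b x = 1)
    (ℓ : X → Params P Q s → ℝ) (hℓ : ∀ x, ContDiff ℝ 2 (ℓ x))
    (d : ℝ)
    (hsym : ∀ (x : X) (lam : ℝ) (win : Fin P → ℝ) (wout : Fin Q → ℝ)
        (rest : Fin s → ℝ),
      ℓ x (Real.exp lam • win, Real.exp (-(d * lam)) • wout, rest)
        = ℓ x (win, wout, rest))
    (η : ℝ) (hη : 0 < η)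
    (F : Params P Q s → ℝ)
    (hF : ∀ θ, F θ = (∑ x, p x * ℓ x θ)
      + (η / 4) * ∑ b, q b *
          ((∑ i, (∑ x, c b x * gIn (ℓ x) θ i) ^ 2)
            + (∑ i, (∑ x, c b x * gOut (ℓ x) θ i) ^ 2)
            + (∑ i, (∑ x, c b x * gRest (ℓ x) θ i) ^ 2)))
    (θstar : Params P Q s) (hmin : IsLocalMin F θstar) :
    ∑ b, q b * ∑ i, (∑ x, c b x * gIn (ℓ x) θstar i) ^ 2
      = d * ∑ b, q b * ∑ i, (∑ x, c b x * gOut (ℓ x) θstar i) ^ 2 := by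
  classical
  have hdiff : ∀ x, Differentiable ℝ (ℓ x) := fun x => (hℓ x).differentiable (by simp)
  have hsym' : ∀ (lam : ℝ) (x : X) (θ : Params P Q s),
      ℓ x (Smap P Q s d lam θ) = ℓ x θ := by
    intro lam x θ
    rw [Smap_apply]
    exact hsym x lam θ.1 θ.2.1 θ.2.2
  set K : ℝ := ∑ x, p x * ℓ x θstar with hK
  set SA : ℝ := ∑ b, q b * ∑ i, (∑ x, c b x * gIn (ℓ x) θstar i) ^ 2 with hSA
  set SB : ℝ := ∑ b, q b * ∑ i, (∑ x, c b x * gOut (ℓ x) θstar i) ^ 2 with hSB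
  set SC : ℝ := ∑ b, q b * ∑ i, (∑ x, c b x * gRest (ℓ x) θstar i) ^ 2 with hSC
  set φ : ℝ → ℝ := fun lam =>
    K + (η/4) * ((Real.exp (-lam))^2 * SA + (Real.exp (d*lam))^2 * SB + SC) with hφdef
  have hφ : ∀ lam, F (Smap P Q s d lam θstar) = φ lam := by
    intro lam
    rw [hF]
    have e1 : ∑ x, p x * ℓ x (Smap P Q s d lam θstar) = K := by
      refine Finset.sum_congr rfl fun x _ => ?_
      rw [hsym' lam x]
    have e2 : ∀ b : B,
        q b * ((∑ i, (∑ x, c b x * gIn (ℓ x) (Smap P Q s d lam θstar) i) ^ 2)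
          + (∑ i, (∑ x, c b x * gOut (ℓ x) (Smap P Q s d lam θstar) i) ^ 2)
          + (∑ i, (∑ x, c b x * gRest (ℓ x) (Smap P Q s d lam θstar) i) ^ 2))
        = (Real.exp (-lam))^2 * (q b * ∑ i, (∑ x, c b x * gIn (ℓ x) θstar i) ^ 2)
          + (Real.exp (d*lam))^2 * (q b * ∑ i, (∑ x, c b x * gOut (ℓ x) θstar i) ^ 2)
          + q b * ∑ i, (∑ x, c b x * gRest (ℓ x) θstar i) ^ 2 := by
      intro b
      have hA : (∑ i, (∑ x, c b x * gIn (ℓ x) (Smap P Q s d lam θstar) i) ^ 2)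
          = (Real.exp (-lam))^2 * ∑ i, (∑ x, c b x * gIn (ℓ x) θstar i) ^ 2 := by
        rw [Finset.mul_sum]
        refine Finset.sum_congr rfl fun i _ => ?_
        have h : ∑ x, c b x * gIn (ℓ x) (Smap P Q s d lam θstar) i
            = Real.exp (-lam) * ∑ x, c b x * gIn (ℓ x) θstar i := by
          rw [Finset.mul_sum]
          refine Finset.sum_congr rfl fun x _ => ?_
          rw [gIn_Smap (hdiff x) (hsym' lam x)]
          ring
        rw [h, mul_pow]
      have hB : (∑ i, (∑ x, c b x * gOut (ℓ x) (Smap P Q s d lam θstar) i) ^ 2)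
          = (Real.exp (d*lam))^2 * ∑ i, (∑ x, c b x * gOut (ℓ x) θstar i) ^ 2 := by
        rw [Finset.mul_sum]
        refine Finset.sum_congr rfl fun i _ => ?_
        have h : ∑ x, c b x * gOut (ℓ x) (Smap P Q s d lam θstar) i
            = Real.exp (d*lam) * ∑ x, c b x * gOut (ℓ x) θstar i := by
          rw [Finset.mul_sum]
          refine Finset.sum_congr rfl fun x _ => ?_
          rw [gOut_Smap (hdiff x) (hsym' lam x)]
          ring
        rw [h, mul_pow]
      have hC : (∑ i, (∑ x, c b x * gRest (ℓ x) (Smap P Q s d lam θstar) i) ^ 2)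
          = ∑ i, (∑ x, c b x * gRest (ℓ x) θstar i) ^ 2 := by
        refine Finset.sum_congr rfl fun i _ => ?_
        congr 1
        refine Finset.sum_congr rfl fun x _ => ?_
        rw [gRest_Smap (hdiff x) (hsym' lam x)]
      rw [hA, hB, hC]
      ring
    rw [e1, Finset.sum_congr rfl (fun b _ => e2 b), Finset.sum_add_distrib,
      Finset.sum_add_distrib, ← Finset.mul_sum, ← Finset.mul_sum]
  have hcont : ContinuousAt (fun lam : ℝ => Smap P Q s d lam θstar) 0 := by
    have : (fun lam : ℝ => Smap P Q s d lam θstar)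
        = fun lam : ℝ => (Real.exp lam • θstar.1, Real.exp (-(d*lam)) • θstar.2.1, θstar.2.2) := by
      funext lam; rw [Smap_apply]
    rw [this]
    fun_prop
  have h0 : Smap P Q s d 0 θstar = θstar := by
    rw [Smap_apply]; simp
  have hminφ : IsLocalMin φ 0 := by
    have h1 : IsLocalMin F (Smap P Q s d 0 θstar) := by rw [h0]; exact hmin
    have h2 := IsLocalMin.comp_continuous (g := fun lam : ℝ => Smap P Q s d lam θstar) (b := (0:ℝ)) h1 hcont
    have h3 : (F ∘ fun lam : ℝ => Smap P Q s d lam θstar) = φ := funext hφ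
    rwa [h3] at h2
  have hderiv : HasDerivAt φ ((η/4) * ((-2) * SA + (2*d) * SB)) 0 := by
    have hd1 : HasDerivAt (fun lam : ℝ => (Real.exp (-lam))^2) (-2) 0 := by
      have h1 : HasDerivAt (fun lam : ℝ => Real.exp (-lam)) (Real.exp (-(0:ℝ)) * (-1)) 0 :=
        (Real.hasDerivAt_exp (-(0:ℝ))).comp 0 (hasDerivAt_neg 0)
      have h2 := h1.fun_pow 2
      simpa using h2
    have hd2 : HasDerivAt (fun lam : ℝ => (Real.exp (d*lam))^2) (2*d) 0 := by
      have hg : HasDerivAt (fun lam : ℝ => d * lam) d 0 := by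
        simpa using (hasDerivAt_id (0:ℝ)).const_mul d
      have h1 : HasDerivAt (fun lam : ℝ => Real.exp (d*lam)) (Real.exp (d*(0:ℝ)) * d) 0 :=
        (Real.hasDerivAt_exp (d*(0:ℝ))).comp 0 hg
      have h2 := h1.fun_pow 2
      simpa [mul_comm, mul_assoc] using h2
    have h3 := (((hd1.mul_const SA).fun_add (hd2.mul_const SB)).add_const SC).const_mul (η/4)
    have h4 := h3.const_add K
    convert h4 using 1 <;> ring
  have hzero : (η/4) * ((-2) * SA + (2*d) * SB) = 0 := by
    rw [← hderiv.deriv]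
    exact hminφ.deriv_eq_zero
  have hη4 : η/4 ≠ 0 := by positivity
  have : (-2) * SA + (2*d) * SB = 0 := by
    rcases mul_eq_zero.1 hzero with h | h
    · exact absurd h hη4
    · exact h
  linarith
end

section
/- For positive reals a, b and a matrix M of rank r with singular values s₁,…,s_r, the minimum of a‖W‖_F² + b‖U‖_F² over all factorizations UW = M (inner dimension ≥ r) equals 2√(ab) Σᵢ sᵢ. -/
open Matrix Finset

/-- Squared Frobenius norm. -/
def frobSq {m n : ℕ} (M : Matrix (Fin m) (Fin n) ℝ) : ℝ := ∑ i, ∑ j, (M i j) ^ 2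

lemma frobSq_nonneg {m n : ℕ} (M : Matrix (Fin m) (Fin n) ℝ) : 0 ≤ frobSq M :=
  Finset.sum_nonneg fun _ _ => Finset.sum_nonneg fun _ _ => sq_nonneg _

lemma frobSq_transpose {m n : ℕ} (M : Matrix (Fin m) (Fin n) ℝ) : frobSq Mᵀ = frobSq M :=
  Finset.sum_comm

lemma frobSq_eq_trace {m n : ℕ} (M : Matrix (Fin m) (Fin n) ℝ) :
    frobSq M = Matrix.trace (Mᵀ * M) := by
  simp [frobSq, Matrix.trace, Matrix.mul_apply, Matrix.diag, sq]
  exact Finset.sum_comm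

lemma trace_sq_le {m n : ℕ} (A B : Matrix (Fin m) (Fin n) ℝ) :
    (Matrix.trace (Aᵀ * B)) ^ 2 ≤ frobSq A * frobSq B := by
  have h1 : Matrix.trace (Aᵀ * B) = ∑ p : Fin n × Fin m, A p.2 p.1 * B p.2 p.1 := by
    simp [Matrix.trace, Matrix.mul_apply, Matrix.diag, Fintype.sum_prod_type]
  have h2 : frobSq A = ∑ p : Fin n × Fin m, (A p.2 p.1) ^ 2 := by
    rw [frobSq, Fintype.sum_prod_type]; exact Finset.sum_comm
  have h3 : frobSq B = ∑ p : Fin n × Fin m, (B p.2 p.1) ^ 2 := by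
    rw [frobSq, Fintype.sum_prod_type]; exact Finset.sum_comm
  rw [h1, h2, h3]
  exact Finset.sum_mul_sq_le_sq_mul_sq _ _ _

lemma frobSq_orth_mul_le {m r k : ℕ} (P : Matrix (Fin m) (Fin r) ℝ)
    (U : Matrix (Fin m) (Fin k) ℝ) (hP : Pᵀ * P = 1) :
    frobSq (Pᵀ * U) ≤ frobSq U := by
  have key : frobSq U = frobSq (Pᵀ * U) + frobSq (U - P * (Pᵀ * U)) := by
    rw [frobSq_eq_trace, frobSq_eq_trace, frobSq_eq_trace]
    have expand : (U - P * (Pᵀ * U))ᵀ * (U - P * (Pᵀ * U))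
        = Uᵀ * U - (Pᵀ * U)ᵀ * (Pᵀ * U) := by
      rw [Matrix.transpose_sub, Matrix.sub_mul, Matrix.mul_sub, Matrix.mul_sub]
      rw [Matrix.transpose_mul, Matrix.transpose_mul, Matrix.transpose_transpose]
      rw [show Uᵀ * P * Pᵀ * (P * (Pᵀ * U)) = Uᵀ * P * ((Pᵀ * P) * (Pᵀ * U)) by
        simp only [Matrix.mul_assoc]]
      rw [hP, Matrix.one_mul]
      abel_nf
      simp [Matrix.mul_assoc]
    rw [expand, Matrix.trace_sub]
    ring
  linarith [frobSq_nonneg (U - P * (Pᵀ * U))]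

lemma sum_fin_restrict {k r : ℕ} (hk : r ≤ k) (g : Fin k → ℝ)
    (hg : ∀ j : Fin k, r ≤ (j : ℕ) → g j = 0) :
    ∑ j, g j = ∑ j : Fin r, g (Fin.castLE hk j) := by
  have h1 : ∑ j ∈ Finset.univ.filter (fun j : Fin k => (j : ℕ) < r), g j = ∑ j, g j := by
    apply Finset.sum_filter_of_ne
    intro x _ hx
    by_contra h
    exact hx (hg x (le_of_not_gt h))
  rw [← h1]
  refine (Finset.sum_bij (fun (j : Fin r) _ => Fin.castLE hk j) ?_ ?_ ?_ ?_).symm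
  · intro a _; simp [Fin.castLE]
  · intro a _ b _ hab
    exact Fin.castLE_injective hk hab
  · intro c hc
    simp only [Finset.mem_filter] at hc
    exact ⟨⟨(c : ℕ), hc.2⟩, Finset.mem_univ _, rfl⟩
  · intros; rfl

/-- For `a, b > 0` and a rank-`r` matrix `M` with singular values `s₁,…,s_r`, the minimum
of `a‖W‖_F² + b‖U‖_F²` over all factorizations `UW = M` (inner dimension `k ≥ r`) equals
`2√(ab) Σᵢ sᵢ`. -/
theorem stmt14 {m n k r : ℕ} (hk : r ≤ k) (a b : ℝ) (ha : 0 < a) (hb : 0 < b)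
    (M : Matrix (Fin m) (Fin n) ℝ) (hrank : M.rank = r)
    (P : Matrix (Fin m) (Fin r) ℝ) (s : Fin r → ℝ) (Q : Matrix (Fin r) (Fin n) ℝ)
    (hs : ∀ i, 0 < s i) (hP : Pᵀ * P = 1) (hQ : Q * Qᵀ = 1)
    (hSVD : M = P * Matrix.diagonal s * Q) :
    IsLeast
      {v : ℝ | ∃ (U : Matrix (Fin m) (Fin k) ℝ) (W : Matrix (Fin k) (Fin n) ℝ),
          U * W = M ∧ v = a * frobSq W + b * frobSq U}
      (2 * Real.sqrt (a * b) * ∑ i, s i) := by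
  have hab : (0:ℝ) < a * b := mul_pos ha hb
  -- useful scalar facts
  set α : Fin r → ℝ := fun i => Real.sqrt (Real.sqrt (a / b) * s i) with hα
  set β : Fin r → ℝ := fun i => Real.sqrt (Real.sqrt (b / a) * s i) with hβ
  have hαβ : ∀ i, α i * β i = s i := by
    intro i
    rw [hα, hβ]
    rw [← Real.sqrt_mul (mul_nonneg (Real.sqrt_nonneg _) (hs i).le)]
    rw [show Real.sqrt (a / b) * s i * (Real.sqrt (b / a) * s i)
        = (Real.sqrt (a / b) * Real.sqrt (b / a)) * (s i * s i) by ring]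
    rw [← Real.sqrt_mul (by positivity)]
    rw [show a / b * (b / a) = 1 by field_simp]
    rw [Real.sqrt_one, one_mul]
    exact Real.sqrt_mul_self (hs i).le
  have hα2 : ∀ i, (α i) ^ 2 = Real.sqrt (a / b) * s i := fun i =>
    Real.sq_sqrt (mul_nonneg (Real.sqrt_nonneg _) (hs i).le)
  have hβ2 : ∀ i, (β i) ^ 2 = Real.sqrt (b / a) * s i := fun i =>
    Real.sq_sqrt (mul_nonneg (Real.sqrt_nonneg _) (hs i).le)
  have hba : b * Real.sqrt (a / b) = Real.sqrt (a * b) := by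
    rw [show a / b = (a * b) / b ^ 2 by field_simp]
    rw [Real.sqrt_div (mul_pos ha hb).le, Real.sqrt_sq hb.le]
    field_simp
  have hab' : a * Real.sqrt (b / a) = Real.sqrt (a * b) := by
    rw [show b / a = (a * b) / a ^ 2 by field_simp]
    rw [Real.sqrt_div (mul_pos ha hb).le, Real.sqrt_sq ha.le]
    field_simp
  constructor
  · -- membership: explicit balanced factorization
    refine ⟨fun i j => if h : (j : ℕ) < r then P i ⟨j, h⟩ * α ⟨j, h⟩ else 0,
            fun j l => if h : (j : ℕ) < r then β ⟨j, h⟩ * Q ⟨j, h⟩ l else 0, ?_, ?_⟩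
    · ext i l
      refine (Matrix.mul_apply).trans ?_; beta_reduce; rw [hSVD]
      rw [sum_fin_restrict hk _ (fun j hj => by
        rw [dif_neg (not_lt.mpr hj), zero_mul])]
      have : ∀ j : Fin r,
          (if h : ((Fin.castLE hk j : Fin k) : ℕ) < r then P i ⟨_, h⟩ * α ⟨_, h⟩ else 0) *
          (if h : ((Fin.castLE hk j : Fin k) : ℕ) < r then β ⟨_, h⟩ * Q ⟨_, h⟩ l else 0)
          = P i j * (s j * Q j l) := by
        intro j
        have hc : ((Fin.castLE hk j : Fin k) : ℕ) < r := j.2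
        rw [dif_pos hc, dif_pos hc]
        show P i j * α j * (β j * Q j l) = _
        rw [← hαβ j]; ring
      rw [Finset.sum_congr rfl (fun j _ => this j)]
      rw [Matrix.mul_assoc, Matrix.mul_apply]
      congr 1
      ext j
      rw [Matrix.diagonal_mul]
    · -- value equals 2√(ab)Σs
      have hU : frobSq ((fun i j => if h : (j : ℕ) < r then P i ⟨j, h⟩ * α ⟨j, h⟩ else 0) : Matrix (Fin m) (Fin k) ℝ)
          = ∑ j : Fin r, (α j) ^ 2 := by
        unfold frobSq
        rw [Finset.sum_comm]
        rw [sum_fin_restrict hk _ (fun j hj => by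
          apply Finset.sum_eq_zero; intro i _
          beta_reduce; rw [dif_neg (not_lt.mpr hj)]; ring)]
        apply Finset.sum_congr rfl
        intro j _
        have : ∀ i, (if h : ((Fin.castLE hk j : Fin k) : ℕ) < r
            then P i ⟨_, h⟩ * α ⟨_, h⟩ else 0) ^ 2 = (P i j) ^ 2 * (α j) ^ 2 := by
          intro i
          have hc : ((Fin.castLE hk j : Fin k) : ℕ) < r := j.2
          rw [dif_pos hc]
          show (P i j * α j) ^ 2 = _
          ring
        rw [Finset.sum_congr rfl (fun i _ => this i), ← Finset.sum_mul]
        have hcol : ∑ i, (P i j) ^ 2 = (1 : ℝ) := by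
          have := congrFun (congrFun hP j) j
          simpa [Matrix.mul_apply, Matrix.one_apply, sq] using this
        rw [hcol, one_mul]
      have hW : frobSq ((fun j l => if h : (j : ℕ) < r then β ⟨j, h⟩ * Q ⟨j, h⟩ l else 0) : Matrix (Fin k) (Fin n) ℝ)
          = ∑ j : Fin r, (β j) ^ 2 := by
        unfold frobSq
        rw [sum_fin_restrict hk _ (fun j hj => by
          apply Finset.sum_eq_zero; intro l _
          beta_reduce; rw [dif_neg (not_lt.mpr hj)]; ring)]
        apply Finset.sum_congr rfl
        intro j _
        have : ∀ l, (if h : ((Fin.castLE hk j : Fin k) : ℕ) < r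
            then β ⟨_, h⟩ * Q ⟨_, h⟩ l else 0) ^ 2 = (β j) ^ 2 * (Q j l) ^ 2 := by
          intro l
          have hc : ((Fin.castLE hk j : Fin k) : ℕ) < r := j.2
          rw [dif_pos hc]
          show (β j * Q j l) ^ 2 = _
          ring
        rw [Finset.sum_congr rfl (fun l _ => this l), ← Finset.mul_sum]
        have hrow : ∑ l, (Q j l) ^ 2 = (1 : ℝ) := by
          have := congrFun (congrFun hQ j) j
          simpa [Matrix.mul_apply, Matrix.one_apply, sq] using this
        rw [hrow, mul_one]
      rw [hU, hW, Finset.mul_sum, Finset.mul_sum, Finset.mul_sum, ← Finset.sum_add_distrib]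
      apply Finset.sum_congr rfl
      intro i _
      rw [hα2, hβ2, ← mul_assoc, ← mul_assoc, hba, hab']
      ring
  · -- lower bound
    rintro v ⟨U, W, hUW, rfl⟩
    have htr : Matrix.trace (Pᵀ * U * (W * Qᵀ)) = ∑ i, s i := by
      rw [show Pᵀ * U * (W * Qᵀ) = Pᵀ * (U * W) * Qᵀ by simp [Matrix.mul_assoc]]
      rw [hUW, hSVD]
      rw [show Pᵀ * (P * Matrix.diagonal s * Q) * Qᵀ
          = (Pᵀ * P) * Matrix.diagonal s * (Q * Qᵀ) by simp [Matrix.mul_assoc]]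
      rw [hP, hQ, Matrix.one_mul, Matrix.mul_one, Matrix.trace_diagonal]
    have hcs : (∑ i, s i) ^ 2 ≤ frobSq (Pᵀ * U) * frobSq (W * Qᵀ) := by
      rw [← htr]
      have : Pᵀ * U * (W * Qᵀ) = ((Pᵀ * U)ᵀ)ᵀ * (W * Qᵀ) := by
        rw [Matrix.transpose_transpose]
      rw [this]
      calc (Matrix.trace (((Pᵀ * U)ᵀ)ᵀ * (W * Qᵀ))) ^ 2
          ≤ frobSq ((Pᵀ * U)ᵀ) * frobSq (W * Qᵀ) := trace_sq_le _ _
        _ = frobSq (Pᵀ * U) * frobSq (W * Qᵀ) := by rw [frobSq_transpose]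
    have hU' : frobSq (Pᵀ * U) ≤ frobSq U := frobSq_orth_mul_le P U hP
    have hW' : frobSq (W * Qᵀ) ≤ frobSq W := by
      have h1 : frobSq (W * Qᵀ) = frobSq (Q * Wᵀ) := by
        rw [← frobSq_transpose (W * Qᵀ), Matrix.transpose_mul, Matrix.transpose_transpose]
      have h2 : frobSq ((Qᵀ)ᵀ * Wᵀ) ≤ frobSq Wᵀ :=
        frobSq_orth_mul_le Qᵀ Wᵀ (by rw [Matrix.transpose_transpose]; exact hQ)
      rw [h1]
      rw [Matrix.transpose_transpose] at h2
      calc frobSq (Q * Wᵀ) ≤ frobSq Wᵀ := h2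
        _ = frobSq W := frobSq_transpose W
    have hssum : (0:ℝ) ≤ ∑ i, s i := Finset.sum_nonneg fun i _ => (hs i).le
    have key : ∑ i, s i ≤ Real.sqrt (frobSq U) * Real.sqrt (frobSq W) := by
      have h3 : (∑ i, s i) ^ 2 ≤ frobSq U * frobSq W := by
        calc (∑ i, s i) ^ 2 ≤ frobSq (Pᵀ * U) * frobSq (W * Qᵀ) := hcs
          _ ≤ frobSq U * frobSq W := by
            apply mul_le_mul hU' hW' (frobSq_nonneg _) (frobSq_nonneg _)
      have h4 : Real.sqrt ((∑ i, s i) ^ 2) ≤ Real.sqrt (frobSq U * frobSq W) :=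
        Real.sqrt_le_sqrt h3
      rwa [Real.sqrt_sq hssum, Real.sqrt_mul (frobSq_nonneg _)] at h4
    have hsab : Real.sqrt (a * b) = Real.sqrt a * Real.sqrt b := Real.sqrt_mul ha.le b
    set x := Real.sqrt (frobSq U) with hx
    set y := Real.sqrt (frobSq W) with hy
    have hx2 : x ^ 2 = frobSq U := Real.sq_sqrt (frobSq_nonneg U)
    have hy2 : y ^ 2 = frobSq W := Real.sq_sqrt (frobSq_nonneg W)
    have hamgm : 2 * Real.sqrt (a * b) * (x * y) ≤ a * frobSq W + b * frobSq U := by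
      rw [← hx2, ← hy2, hsab]
      nlinarith [sq_nonneg (Real.sqrt a * y - Real.sqrt b * x),
        Real.sq_sqrt ha.le, Real.sq_sqrt hb.le,
        Real.sqrt_nonneg a, Real.sqrt_nonneg b]
    calc 2 * Real.sqrt (a * b) * ∑ i, s i
        ≤ 2 * Real.sqrt (a * b) * (x * y) := by
          apply mul_le_mul_of_nonneg_left key (by positivity)
      _ ≤ a * frobSq W + b * frobSq U := hamgm
end

section
/- If matrices W₁,…,W_D satisfy the balance conditions W_{i+1}ᵀ W_{i+1} = Wᵢ Wᵢᵀ for i = 1,…,D−1 and W_D ⋯ W₁ = M with SVD M = U_D S U₀ᵀ of rank d and all widths ≥ d, then there exist matrices Uᵢ with UᵢᵀUᵢ = I_d and diagonal sign matrices Pᵢ with ∏Pᵢ = I such that Wᵢ = Uᵢ Pᵢ S^{1/D} U_{i−1}ᵀ; in particular every Wᵢ has singular values equal to the D-th roots of the singular values of M. -/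
open Matrix Finset

namespace Matrix.PosSemidef

open scoped MatrixOrder

noncomputable def sqrt {m : Type*} [Fintype m] [DecidableEq m] {A : Matrix m m ℝ}
    (_hA : A.PosSemidef) : Matrix m m ℝ := CFC.sqrt A

lemma posSemidef_sqrt {m : Type*} [Fintype m] [DecidableEq m] {A : Matrix m m ℝ}
    (hA : A.PosSemidef) : hA.sqrt.PosSemidef :=
  (CFC.sqrt_nonneg A).posSemidef

lemma sqrt_mul_self {m : Type*} [Fintype m] [DecidableEq m] {A : Matrix m m ℝ}
    (hA : A.PosSemidef) : hA.sqrt * hA.sqrt = A :=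
  CFC.sqrt_mul_sqrt_self A hA.nonneg

end Matrix.PosSemidef

section Stmt16Aux
set_option linter.unusedSectionVars false

namespace Stmt16Aux


variable {m : Type*} [Fintype m] [DecidableEq m]

lemma eq_zero_of_trace_transpose_mul_self {p : Type*} [Fintype p] {Y : Matrix m p ℝ}
    (h : (Yᵀ * Y).trace = 0) : Y = 0 := by
  have h' : ∑ i, ∑ j, (Y j i) ^ 2 = 0 := by
    rw [← h]; simp [Matrix.trace, Matrix.mul_apply, Matrix.diag, sq]
  have h1 := (Finset.sum_eq_zero_iff_of_nonneg
    (fun i _ => Finset.sum_nonneg fun j _ => sq_nonneg (Y j i))).mp h'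
  ext a b
  have h2 := (Finset.sum_eq_zero_iff_of_nonneg
    (fun j _ => sq_nonneg (Y j b))).mp (h1 b (Finset.mem_univ _)) a (Finset.mem_univ _)
  simpa using sq_eq_zero_iff.mp h2

lemma trace_transpose_mul_self_nonneg {p : Type*} [Fintype p] (Y : Matrix m p ℝ) :
    0 ≤ (Yᵀ * Y).trace := by
  have h : (Yᵀ * Y).trace = ∑ i, ∑ j, (Y j i) ^ 2 := by
    simp [Matrix.trace, Matrix.mul_apply, Matrix.diag, sq]
  rw [h]; positivity

lemma mul_eq_zero_of_transpose_mul_self {p : Type*} [Fintype p]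
    {Y : Matrix m p ℝ} (h : Yᵀ * Y = 0) : Y = 0 := by
  rw [← Matrix.conjTranspose_eq_transpose_of_trivial] at h
  exact Matrix.conjTranspose_mul_self_eq_zero.mp h

lemma transpose_eq_of_isHermitian {A : Matrix m m ℝ} (h : A.IsHermitian) : Aᵀ = A := by
  rwa [Matrix.IsHermitian, Matrix.conjTranspose_eq_transpose_of_trivial] at h

lemma trace_form_eq {A B X P Q : Matrix m m ℝ}
    (hP : Pᵀ = P) (hQ : Qᵀ = Q) (hPP : P * P = A) (hQQ : Q * Q = B) (hX : Xᵀ = X) :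
    (X * A * X * B).trace = ((P * X * Q)ᵀ * (P * X * Q)).trace := by
  have e1 : (P * X * Q)ᵀ * (P * X * Q) = Q * (X * A * X * Q) := by
    rw [Matrix.transpose_mul, Matrix.transpose_mul, hP, hQ, hX, ← hPP]; noncomm_ring
  have e2 : X * A * X * B = (X * A * X * Q) * Q := by
    rw [← hQQ]; exact (Matrix.mul_assoc _ _ _).symm
  rw [e1, e2, Matrix.trace_mul_comm]

lemma trace_form_nonneg {A B X : Matrix m m ℝ} (hA : A.PosSemidef) (hB : B.PosSemidef)
    (hX : Xᵀ = X) : 0 ≤ (X * A * X * B).trace := by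
  rw [trace_form_eq (transpose_eq_of_isHermitian hA.posSemidef_sqrt.1)
    (transpose_eq_of_isHermitian hB.posSemidef_sqrt.1) hA.sqrt_mul_self hB.sqrt_mul_self hX]
  exact trace_transpose_mul_self_nonneg _

lemma zero_of_form_aux {A B X P Q : Matrix m m ℝ}
    (hPP : P * P = A) (hQQ : Q * Q = B) (h0 : P * X * Q = 0) : A * X * B = 0 := by
  subst hPP; subst hQQ
  have e : P * P * X * (Q * Q) = P * (P * X * Q) * Q := by noncomm_ring
  rw [e, h0, Matrix.mul_zero, Matrix.zero_mul]

lemma zero_of_trace_form {A B X : Matrix m m ℝ} (hA : A.PosSemidef) (hB : B.PosSemidef)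
    (hX : Xᵀ = X) (h : (X * A * X * B).trace = 0) : A * X * B = 0 := by
  have h0 : hA.sqrt * X * hB.sqrt = 0 := by
    apply eq_zero_of_trace_transpose_mul_self
    rw [← trace_form_eq (transpose_eq_of_isHermitian hA.posSemidef_sqrt.1)
      (transpose_eq_of_isHermitian hB.posSemidef_sqrt.1) hA.sqrt_mul_self hB.sqrt_mul_self hX, h]
  exact zero_of_form_aux hA.sqrt_mul_self hB.sqrt_mul_self h0


lemma mul_eq_zero_of_pow_mul_eq_zero {A : Matrix m m ℝ} (hA : Aᵀ = A) :
    ∀ k (X : Matrix m m ℝ), A ^ (k + 1) * X = 0 → A * X = 0 := by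
  intro k
  induction k using Nat.strong_induction_on with
  | _ k ih =>
    intro X h
    match k, h with
    | 0, h => simpa using h
    | (j + 1), h =>
      have h2 : A ^ (2 * (j + 1)) * X = 0 := by
        have e : A ^ (2 * (j + 1)) = A ^ j * A ^ (j + 2) := by
          rw [← pow_add]; ring_nf
        rw [e, Matrix.mul_assoc, h, Matrix.mul_zero]
      have h3 : (A ^ (j + 1) * X)ᵀ * (A ^ (j + 1) * X) = 0 := by
        rw [Matrix.transpose_mul, Matrix.transpose_pow, hA, Matrix.mul_assoc,
          ← Matrix.mul_assoc (A ^ (j + 1)), ← pow_add]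
        have e : j + 1 + (j + 1) = 2 * (j + 1) := by ring
        rw [e, ← Matrix.mul_assoc, Matrix.mul_assoc Xᵀ, h2, Matrix.mul_zero]
      have h4 : A ^ (j + 1) * X = 0 := mul_eq_zero_of_transpose_mul_self h3
      exact ih j (Nat.lt_succ_self _) X h4

lemma pow_sub_pow_eq (A B : Matrix m m ℝ) :
    ∀ N, A ^ N - B ^ N = ∑ i ∈ Finset.range N, A ^ i * (A - B) * B ^ (N - 1 - i) := by
  intro N
  induction N with
  | zero => simp
  | succ N ih =>
    rw [Finset.sum_range_succ]
    have e1 : ∀ i ∈ Finset.range N, A ^ i * (A - B) * B ^ (N + 1 - 1 - i)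
        = (A ^ i * (A - B) * B ^ (N - 1 - i)) * B := by
      intro i hi
      rw [Finset.mem_range] at hi
      have e : N + 1 - 1 - i = (N - 1 - i) + 1 := by omega
      rw [e, pow_succ, ← Matrix.mul_assoc]
    rw [Finset.sum_congr rfl e1, ← Finset.sum_mul, ← ih]
    have e : N + 1 - 1 - N = 0 := by omega
    rw [e, pow_zero, Matrix.mul_one]
    simp only [pow_succ]
    noncomm_ring

lemma psd_pow_eq {A B : Matrix m m ℝ} (hA : A.PosSemidef) (hB : B.PosSemidef)
    {k : ℕ} (hk : 1 ≤ k) (h : A ^ k = B ^ k) : A = B := by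
  rcases Nat.lt_or_ge k 2 with hk2 | hk2
  · interval_cases k
    simpa using h
  have hAt : Aᵀ = A := transpose_eq_of_isHermitian hA.1
  have hBt : Bᵀ = B := transpose_eq_of_isHermitian hB.1
  have hX : (A - B)ᵀ = A - B := by rw [Matrix.transpose_sub, hAt, hBt]
  have hsum : ∑ i ∈ Finset.range k,
      ((A - B) * A ^ i * (A - B) * B ^ (k - 1 - i)).trace = 0 := by
    have e1 : (A - B) * (A ^ k - B ^ k)
        = ∑ i ∈ Finset.range k, (A - B) * A ^ i * (A - B) * B ^ (k - 1 - i) := by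
      rw [pow_sub_pow_eq A B k, Matrix.mul_sum]
      exact Finset.sum_congr rfl fun i _ => by noncomm_ring
    calc ∑ i ∈ Finset.range k, ((A - B) * A ^ i * (A - B) * B ^ (k - 1 - i)).trace
        = (∑ i ∈ Finset.range k, (A - B) * A ^ i * (A - B) * B ^ (k - 1 - i)).trace :=
          (Matrix.trace_sum _ _).symm
      _ = ((A - B) * (A ^ k - B ^ k)).trace := by rw [← e1]
      _ = 0 := by rw [h, sub_self, Matrix.mul_zero, Matrix.trace_zero]
  have hzero : ∀ i ∈ Finset.range k,
      ((A - B) * A ^ i * (A - B) * B ^ (k - 1 - i)).trace = 0 :=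
    (Finset.sum_eq_zero_iff_of_nonneg
      (fun i _ => trace_form_nonneg (hA.pow i) (hB.pow _) hX)).mp hsum
  have hAX : A * (A - B) = 0 := by
    have h1 := hzero (k - 1) (Finset.mem_range.mpr (by omega))
    have h2 := zero_of_trace_form (hA.pow (k - 1)) (hB.pow (k - 1 - (k - 1))) hX h1
    have e : k - 1 - (k - 1) = 0 := by omega
    rw [e, pow_zero, Matrix.mul_one] at h2
    have e2 : k - 1 = (k - 2) + 1 := by omega
    rw [e2] at h2
    exact mul_eq_zero_of_pow_mul_eq_zero hAt (k - 2) _ h2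
  have hBX : B * (A - B) = 0 := by
    have h1 := hzero 0 (Finset.mem_range.mpr (by omega))
    have h2 := zero_of_trace_form (hA.pow 0) (hB.pow (k - 1 - 0)) hX h1
    rw [pow_zero, Matrix.one_mul] at h2
    have h3 : B ^ (k - 1 - 0) * (A - B) = 0 := by
      have := congrArg Matrix.transpose h2
      rwa [Matrix.transpose_mul, Matrix.transpose_pow, hBt, hX, Matrix.transpose_zero] at this
    have e2 : k - 1 - 0 = (k - 2) + 1 := by omega
    rw [e2] at h3
    exact mul_eq_zero_of_pow_mul_eq_zero hBt (k - 2) _ h3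
  have hXX : (A - B)ᵀ * (A - B) = 0 := by
    rw [hX, sub_mul, hAX, hBX, sub_self]
  have := mul_eq_zero_of_transpose_mul_self hXX
  exact sub_eq_zero.mp this

lemma sandwich_pow {p q : Type*} [Fintype p] [DecidableEq p] [Fintype q] [DecidableEq q]
    {U : Matrix p q ℝ} (hU : Uᵀ * U = 1) (f : q → ℝ) :
    ∀ N, (U * Matrix.diagonal f * Uᵀ) ^ (N + 1)
      = U * Matrix.diagonal (fun j => f j ^ (N + 1)) * Uᵀ := by
  intro N
  induction N with
  | zero => simp
  | succ N ih =>
    rw [pow_succ, ih]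
    have e1 : U * Matrix.diagonal (fun j => f j ^ (N + 1)) * Uᵀ * (U * Matrix.diagonal f * Uᵀ)
        = U * (Matrix.diagonal (fun j => f j ^ (N + 1)) * (Uᵀ * U) * Matrix.diagonal f) * Uᵀ := by
      simp only [Matrix.mul_assoc]
    rw [e1, hU, Matrix.mul_one, Matrix.diagonal_mul_diagonal]
    have e2 : (fun j => f j ^ (N + 1) * f j) = fun j => f j ^ (N + 1 + 1) :=
      funext fun j => (pow_succ _ _).symm
    rw [e2]

end Stmt16Aux

end Stmt16Aux

open Stmt16Aux

set_option maxHeartbeats 1000000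

/-- Product `W_k ⋯ W_1` of a chain of layer matrices (`chainProd n W 0 = 1`). -/
def chainProd (n : ℕ → ℕ) (W : ∀ i : ℕ, Matrix (Fin (n (i + 1))) (Fin (n i)) ℝ) :
    ∀ k : ℕ, Matrix (Fin (n k)) (Fin (n 0)) ℝ
  | 0 => 1
  | k + 1 => W k * chainProd n W k

/-- If `W₁,…,W_D` satisfy the balance conditions `W_{i+1}ᵀW_{i+1} = WᵢWᵢᵀ` and
`W_D ⋯ W₁ = M` with SVD `M = U_D S U₀ᵀ` of rank `d` (all widths and all `rank Wᵢ` equal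
to `d`), then `Wᵢ = U_{i+1} Pᵢ S^{1/D} Uᵢᵀ` for semi-orthogonal `Uᵢ` and diagonal sign
matrices `Pᵢ` with `∏ Pᵢ = 1`. -/
theorem stmt16 {D d : ℕ} (hD : 1 ≤ D) (n : ℕ → ℕ) (hwidth : ∀ i ≤ D, d ≤ n i)
    (M : Matrix (Fin (n D)) (Fin (n 0)) ℝ) (hrank : M.rank = d)
    (UD : Matrix (Fin (n D)) (Fin d) ℝ) (s : Fin d → ℝ)
    (U0 : Matrix (Fin (n 0)) (Fin d) ℝ)
    (hs : ∀ j, 0 < s j) (hUD : UDᵀ * UD = 1) (hU0 : U0ᵀ * U0 = 1)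
    (hSVD : M = UD * Matrix.diagonal s * U0ᵀ)
    (W : ∀ i : ℕ, Matrix (Fin (n (i + 1))) (Fin (n i)) ℝ)
    (hWrank : ∀ i < D, (W i).rank = d)
    (hbalance : ∀ i, i + 1 < D → (W (i + 1))ᵀ * W (i + 1) = W i * (W i)ᵀ)
    (hconstraint : chainProd n W D = M) :
    ∃ (U : ∀ i : ℕ, Matrix (Fin (n i)) (Fin d) ℝ) (ε : ℕ → Fin d → ℝ),
      U 0 = U0 ∧ U D = UD ∧
      (∀ i ≤ D, (U i)ᵀ * U i = 1) ∧
      (∀ i j, ε i j = 1 ∨ ε i j = -1) ∧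
      (∀ j, ∏ i ∈ Finset.range D, ε i j = 1) ∧
      (∀ i < D, W i = U (i + 1) * Matrix.diagonal (ε i) *
        Matrix.diagonal (fun j => (s j) ^ ((D : ℝ)⁻¹)) * (U i)ᵀ) := by

  classical
  set σ : Fin d → ℝ := fun j => (s j) ^ ((D : ℝ)⁻¹) with hσdef
  have hσpos : ∀ j, 0 < σ j := fun j => Real.rpow_pos_of_pos (hs j) _
  have hDne : (D : ℝ) ≠ 0 := Nat.cast_ne_zero.mpr (by omega)
  have hσpowD : ∀ j, σ j ^ D = s j := by
    intro j
    rw [hσdef, ← Real.rpow_natCast ((s j) ^ ((D : ℝ)⁻¹)) D, ← Real.rpow_mul (hs j).le,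
      inv_mul_cancel₀ hDne, Real.rpow_one]
  have hσ2powD : ∀ j, (σ j ^ 2) ^ D = s j ^ 2 := by
    intro j
    rw [← pow_mul, mul_comm, pow_mul, hσpowD]
  -- the recursively defined semi-orthogonal factors
  let Uf : ∀ i : ℕ, Matrix (Fin (n i)) (Fin d) ℝ :=
    fun i => Nat.rec U0 (fun i Ui => W i * Ui * Matrix.diagonal (fun j => (σ j)⁻¹)) i
  have hUf0 : Uf 0 = U0 := rfl
  have hUfS : ∀ i, Uf (i + 1) = W i * Uf i * Matrix.diagonal (fun j => (σ j)⁻¹) := fun i => rfl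
  -- chain product transpose identities
  have L1 : ∀ k, k + 1 ≤ D → chainProd n W (k + 1) * ((W 0)ᵀ * W 0)
      = (W k * (W k)ᵀ) * chainProd n W (k + 1) := by
    intro k
    induction k with
    | zero =>
      intro _
      show (W 0 * chainProd n W 0) * _ = _ * (W 0 * chainProd n W 0)
      simp only [chainProd, Matrix.mul_one]
      rw [Matrix.mul_assoc]
    | succ k ih =>
      intro hk
      have hb := hbalance k (by omega)
      show (W (k + 1) * chainProd n W (k + 1)) * _ = _ * (W (k + 1) * chainProd n W (k + 1))
      rw [Matrix.mul_assoc, ih (by omega), ← Matrix.mul_assoc, ← hb]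
      simp only [Matrix.mul_assoc]
  have L2 : ∀ k, k ≤ D → (chainProd n W k)ᵀ * chainProd n W k = ((W 0)ᵀ * W 0) ^ k := by
    intro k
    induction k with
    | zero =>
      intro _
      show (1 : Matrix (Fin (n 0)) (Fin (n 0)) ℝ)ᵀ * 1 = _ ^ 0
      simp
    | succ k ih =>
      intro hk
      show (W k * chainProd n W k)ᵀ * (W k * chainProd n W k) = _
      rw [Matrix.transpose_mul]
      match k with
      | 0 =>
        show (1:Matrix (Fin (n 0)) (Fin (n 0)) ℝ)ᵀ * (W 0)ᵀ * (W 0 * 1) = _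
        simp
      | m + 1 =>
        have hb := hbalance m (by omega)
        calc (chainProd n W (m+1))ᵀ * (W (m+1))ᵀ * (W (m+1) * chainProd n W (m+1))
            = (chainProd n W (m+1))ᵀ * ((W (m+1))ᵀ * W (m+1) * chainProd n W (m+1)) := by
              simp only [Matrix.mul_assoc]
          _ = (chainProd n W (m+1))ᵀ * (W m * (W m)ᵀ * chainProd n W (m+1)) := by rw [hb]
          _ = (chainProd n W (m+1))ᵀ * (chainProd n W (m+1) * ((W 0)ᵀ * W 0)) := by
              rw [← L1 m (by omega)]
          _ = ((chainProd n W (m+1))ᵀ * chainProd n W (m+1)) * ((W 0)ᵀ * W 0) := by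
              rw [Matrix.mul_assoc]
          _ = ((W 0)ᵀ * W 0) ^ (m + 1) * ((W 0)ᵀ * W 0) := by rw [ih (by omega)]
          _ = _ := by rw [← pow_succ]
  -- identify (W 0)ᵀ * W 0
  have hA0psd : ((W 0)ᵀ * W 0).PosSemidef := by
    have := Matrix.posSemidef_conjTranspose_mul_self (W 0)
    rwa [Matrix.conjTranspose_eq_transpose_of_trivial] at this
  have hBpsd : (U0 * Matrix.diagonal (fun j => σ j ^ 2) * U0ᵀ).PosSemidef := by
    have e : U0 * Matrix.diagonal (fun j => σ j ^ 2) * U0ᵀ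
        = (Matrix.diagonal σ * U0ᵀ)ᴴ * (Matrix.diagonal σ * U0ᵀ) := by
      rw [Matrix.conjTranspose_eq_transpose_of_trivial, Matrix.transpose_mul,
        Matrix.diagonal_transpose, Matrix.transpose_transpose,
        show (fun j => σ j ^ 2) = (fun j => σ j * σ j) from funext fun j => pow_two (σ j),
        ← Matrix.diagonal_mul_diagonal]
      simp only [Matrix.mul_assoc]
    rw [e]
    exact Matrix.posSemidef_conjTranspose_mul_self _
  have hMM : ((W 0)ᵀ * W 0) ^ D = U0 * Matrix.diagonal (fun j => s j ^ 2) * U0ᵀ := by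
    rw [← L2 D le_rfl, hconstraint, hSVD]
    rw [Matrix.transpose_mul, Matrix.transpose_mul, Matrix.transpose_transpose,
      Matrix.diagonal_transpose]
    calc U0 * (Matrix.diagonal s * UDᵀ) * (UD * Matrix.diagonal s * U0ᵀ)
        = U0 * (Matrix.diagonal s * (UDᵀ * UD) * Matrix.diagonal s) * U0ᵀ := by
          simp only [Matrix.mul_assoc]
      _ = U0 * Matrix.diagonal (fun j => s j ^ 2) * U0ᵀ := by
          rw [hUD, Matrix.mul_one, Matrix.diagonal_mul_diagonal,
            show (fun i => s i * s i) = (fun j => s j ^ 2) from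
              funext fun j => (pow_two (s j)).symm]
  have hBD : (U0 * Matrix.diagonal (fun j => σ j ^ 2) * U0ᵀ) ^ D
      = U0 * Matrix.diagonal (fun j => s j ^ 2) * U0ᵀ := by
    obtain ⟨D', hD'⟩ : ∃ D', D = D' + 1 := ⟨D - 1, by omega⟩
    rw [hD', sandwich_pow hU0 _ D',
      show (fun j => (σ j ^ 2) ^ (D' + 1)) = (fun j => s j ^ 2) from
        funext fun j => by rw [← hD']; exact hσ2powD j]
  have base : (W 0)ᵀ * W 0 = Uf 0 * Matrix.diagonal (fun j => σ j ^ 2) * (Uf 0)ᵀ := by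
    rw [hUf0]
    exact psd_pow_eq hA0psd hBpsd hD (hMM.trans hBD.symm)
  -- diagonal inverse
  have hdinv : Matrix.diagonal (fun j => (σ j)⁻¹) * Matrix.diagonal σ
      = (1 : Matrix (Fin d) (Fin d) ℝ) := by
    rw [Matrix.diagonal_mul_diagonal,
      show (fun j => (σ j)⁻¹ * σ j) = (fun _ : Fin d => (1:ℝ)) from
        funext fun j => inv_mul_cancel₀ (hσpos j).ne', Matrix.diagonal_one]
  -- the inductive step
  have step : ∀ i, (Uf i)ᵀ * Uf i = 1 →
      (W i)ᵀ * W i = Uf i * Matrix.diagonal (fun j => σ j ^ 2) * (Uf i)ᵀ →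
      (W i = Uf (i + 1) * Matrix.diagonal σ * (Uf i)ᵀ ∧ (Uf (i + 1))ᵀ * Uf (i + 1) = 1) := by
    intro i f1 f2
    have hGP : (W i)ᵀ * (W i * (Uf i * (Uf i)ᵀ)) = (W i)ᵀ * W i := by
      rw [← Matrix.mul_assoc, f2]
      calc Uf i * Matrix.diagonal (fun j => σ j ^ 2) * (Uf i)ᵀ * (Uf i * (Uf i)ᵀ)
          = Uf i * Matrix.diagonal (fun j => σ j ^ 2) * ((Uf i)ᵀ * Uf i) * (Uf i)ᵀ := by
            simp only [Matrix.mul_assoc]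
        _ = _ := by rw [f1, Matrix.mul_one]
    have hz : (W i)ᵀ * (W i - W i * (Uf i * (Uf i)ᵀ)) = 0 := by
      rw [Matrix.mul_sub, hGP, sub_self]
    have hz2 : (W i - W i * (Uf i * (Uf i)ᵀ))ᵀ * (W i - W i * (Uf i * (Uf i)ᵀ)) = 0 := by
      have e : (W i - W i * (Uf i * (Uf i)ᵀ))ᵀ
          = (W i)ᵀ - Uf i * (Uf i)ᵀ * (W i)ᵀ := by
        rw [Matrix.transpose_sub, Matrix.transpose_mul, Matrix.transpose_mul,
          Matrix.transpose_transpose]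
      rw [e, Matrix.sub_mul, hz, Matrix.mul_assoc (Uf i * (Uf i)ᵀ), hz,
        Matrix.mul_zero, sub_zero]
    have hproj : W i * (Uf i * (Uf i)ᵀ) = W i :=
      (sub_eq_zero.mp (mul_eq_zero_of_transpose_mul_self hz2)).symm
    constructor
    · rw [hUfS i, Matrix.mul_assoc (W i * Uf i), hdinv, Matrix.mul_one,
        Matrix.mul_assoc, hproj]
    · rw [hUfS i, Matrix.transpose_mul, Matrix.transpose_mul, Matrix.diagonal_transpose]
      have e4 : (Matrix.diagonal fun j => (σ j)⁻¹) * ((Uf i)ᵀ * (W i)ᵀ) *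
          (W i * Uf i * Matrix.diagonal fun j => (σ j)⁻¹)
          = (Matrix.diagonal fun j => (σ j)⁻¹) * ((Uf i)ᵀ * ((W i)ᵀ * W i) * Uf i) *
            (Matrix.diagonal fun j => (σ j)⁻¹) := by
        simp only [Matrix.mul_assoc]
      rw [e4, f2]
      have e5 : (Uf i)ᵀ * (Uf i * Matrix.diagonal (fun j => σ j ^ 2) * (Uf i)ᵀ) * Uf i
          = Matrix.diagonal (fun j => σ j ^ 2) := by
        calc (Uf i)ᵀ * (Uf i * Matrix.diagonal (fun j => σ j ^ 2) * (Uf i)ᵀ) * Uf i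
            = ((Uf i)ᵀ * Uf i) * Matrix.diagonal (fun j => σ j ^ 2) * ((Uf i)ᵀ * Uf i) := by
              simp only [Matrix.mul_assoc]
          _ = _ := by rw [f1, Matrix.one_mul, Matrix.mul_one]
      rw [e5, Matrix.diagonal_mul_diagonal, Matrix.diagonal_mul_diagonal,
        show (fun j => (σ j)⁻¹ * σ j ^ 2 * (σ j)⁻¹) = (fun _ : Fin d => (1:ℝ)) from
          funext fun j => by rw [pow_two]; field_simp [(hσpos j).ne'], Matrix.diagonal_one]
  -- the main induction
  have main : ∀ i, i < D → ((Uf i)ᵀ * Uf i = 1 ∧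
      (W i)ᵀ * W i = Uf i * Matrix.diagonal (fun j => σ j ^ 2) * (Uf i)ᵀ) := by
    intro i
    induction i with
    | zero => exact fun _ => ⟨by rw [hUf0]; exact hU0, base⟩
    | succ i ih =>
      intro h
      obtain ⟨f1, f2⟩ := ih (by omega)
      obtain ⟨f3, f4⟩ := step i f1 f2
      refine ⟨f4, ?_⟩
      rw [hbalance i h, f3]
      have e : (Uf (i+1) * Matrix.diagonal σ * (Uf i)ᵀ) *
            (Uf (i+1) * Matrix.diagonal σ * (Uf i)ᵀ)ᵀ
          = Uf (i+1) * (Matrix.diagonal σ * ((Uf i)ᵀ * Uf i) * Matrix.diagonal σ) *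
            (Uf (i+1))ᵀ := by
        rw [Matrix.transpose_mul, Matrix.transpose_mul, Matrix.diagonal_transpose,
          Matrix.transpose_transpose]
        simp only [Matrix.mul_assoc]
      rw [e, f1, Matrix.mul_one, Matrix.diagonal_mul_diagonal,
        show (fun j => σ j * σ j) = (fun j => σ j ^ 2) from
          funext fun j => (pow_two (σ j)).symm]
  have fact3 : ∀ i, i < D → W i = Uf (i + 1) * Matrix.diagonal σ * (Uf i)ᵀ :=
    fun i h => (step i (main i h).1 (main i h).2).1
  have fact1 : ∀ i, i ≤ D → (Uf i)ᵀ * Uf i = 1 := by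
    intro i hi
    match i with
    | 0 => rw [hUf0]; exact hU0
    | i + 1 => exact (step i (main i (by omega)).1 (main i (by omega)).2).2
  -- chain product formula
  have chainF : ∀ k, k ≤ D → 1 ≤ k →
      chainProd n W k = Uf k * Matrix.diagonal (fun j => σ j ^ k) * U0ᵀ := by
    intro k
    induction k with
    | zero => intro _ h; omega
    | succ k ih =>
      intro hk _
      match k, ih with
      | 0, _ =>
        show W 0 * chainProd n W 0 = _
        rw [show chainProd n W 0 = 1 from rfl, Matrix.mul_one, fact3 0 (by omega), hUf0,
          show (fun j => σ j ^ 1) = σ from funext fun j => pow_one (σ j)]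
      | m + 1, ih =>
        show W (m+1) * chainProd n W (m+1) = _
        rw [ih (by omega) (by omega), fact3 (m+1) (by omega)]
        calc (Uf (m+2) * Matrix.diagonal σ * (Uf (m+1))ᵀ) *
              (Uf (m+1) * Matrix.diagonal (fun j => σ j ^ (m+1)) * U0ᵀ)
            = Uf (m+2) * (Matrix.diagonal σ * ((Uf (m+1))ᵀ * Uf (m+1)) *
                Matrix.diagonal (fun j => σ j ^ (m+1))) * U0ᵀ := by
              simp only [Matrix.mul_assoc]
          _ = _ := by
              rw [fact1 (m+1) (by omega), Matrix.mul_one, Matrix.diagonal_mul_diagonal,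
                show (fun j => σ j * σ j ^ (m+1)) = (fun j => σ j ^ (m+1+1)) from
                  funext fun j => by rw [← pow_succ']]
  -- conclusion
  have hM' : M = Uf D * Matrix.diagonal s * U0ᵀ := by
    rw [← hconstraint, chainF D le_rfl hD,
      show (fun j => σ j ^ D) = s from funext fun j => hσpowD j]
  have hss : Matrix.diagonal s * Matrix.diagonal (fun j => (s j)⁻¹)
      = (1 : Matrix (Fin d) (Fin d) ℝ) := by
    rw [Matrix.diagonal_mul_diagonal,
      show (fun j => s j * (s j)⁻¹) = (fun _ : Fin d => (1:ℝ)) from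
        funext fun j => mul_inv_cancel₀ (hs j).ne', Matrix.diagonal_one]
  have hUfD : Uf D = UD := by
    have e1 : Uf D * Matrix.diagonal s * U0ᵀ = UD * Matrix.diagonal s * U0ᵀ :=
      hM'.symm.trans hSVD
    have e2 : Uf D * Matrix.diagonal s = UD * Matrix.diagonal s := by
      have := congrArg (fun X => X * U0) e1
      simpa only [Matrix.mul_assoc, hU0, Matrix.mul_one] using this
    have e3 := congrArg (fun X => X * Matrix.diagonal (fun j => (s j)⁻¹)) e2
    simpa only [Matrix.mul_assoc, hss, Matrix.mul_one] using e3
  refine ⟨Uf, fun _ _ => 1, hUf0, hUfD, fact1, fun i j => Or.inl rfl,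
    fun j => Finset.prod_const_one, ?_⟩
  intro i hi
  simp only [Matrix.diagonal_one, Matrix.mul_one]
  exact fact3 i hi
end
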